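/- arXiv:1004.0151 — 7 statements merged into one kernel-verified Lean document; each statement's English description precedes it below -/
import Mathlib

section
/- For every complex number λ not lying in [0,∞), the limit as N → ∞ of ( ∫_{x ∈ ℝ³, ‖x‖ ≤ N} 1/(‖x‖² − λ) dx − 4πN ) exists and equals 2π² i √λ. -/
open MeasureTheory Filter

/-- The branch of the complex square root with positive imaginary part
(for `z ∉ [0,∞)`): `√z = i · (−z)^{1/2}` where `(−z)^{1/2}` is the principal root. -/
noncomputable def sqrtUpper (z : ℂ) : ℂ := Complex.I * (-z) ^ ((1 : ℂ) / 2)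

lemma sqrtUpper_im_pos {lam : ℂ} (hlam : ∀ t : ℝ, 0 ≤ t → lam ≠ (t : ℂ)) :
    0 < (sqrtUpper lam).im := by
  have hne : lam ≠ 0 := hlam 0 le_rfl
  have hne' : -lam ≠ 0 := neg_ne_zero.mpr hne
  have harg : Complex.arg (-lam) ≠ Real.pi := by
    intro h
    rw [Complex.arg_eq_pi_iff] at h
    obtain ⟨h1, h2⟩ := h
    have : lam = ((lam.re : ℝ) : ℂ) := by
      apply Complex.ext <;> simp
      · simpa using h2
    exact hlam lam.re (by nlinarith [Complex.neg_re lam ▸ h1]) this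
  have harg2 : Complex.arg (-lam) / 2 ∈ Set.Ioo (-(Real.pi/2)) (Real.pi/2) := by
    constructor
    · have := Complex.neg_pi_lt_arg (-lam); linarith
    · have := Complex.arg_le_pi (-lam)
      have : Complex.arg (-lam) < Real.pi := lt_of_le_of_ne this harg
      linarith
  have : 0 < ((-lam) ^ ((1:ℂ)/2)).re := by
    rw [Complex.cpow_def_of_ne_zero hne', Complex.exp_re]
    apply mul_pos (Real.exp_pos _)
    have him : (Complex.log (-lam) * ((1:ℂ)/2)).im = Complex.arg (-lam) / 2 := by
      simp [Complex.log_im, Complex.mul_im, Complex.log_re]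
      ring
    rw [him]
    exact Real.cos_pos_of_mem_Ioo harg2
  simpa [sqrtUpper, Complex.mul_im, Complex.I_re, Complex.I_im] using this

lemma sqrtUpper_sq {lam : ℂ} (hlam : ∀ t : ℝ, 0 ≤ t → lam ≠ (t : ℂ)) :
    (sqrtUpper lam) ^ 2 = lam := by
  have hne' : -lam ≠ 0 := neg_ne_zero.mpr (hlam 0 le_rfl)
  have : ((-lam) ^ ((1:ℂ)/2)) ^ 2 = -lam := by
    rw [sq, ← Complex.cpow_add _ _ hne']
    norm_num
  rw [sqrtUpper, mul_pow, Complex.I_sq, this]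
  ring

lemma ball_integral_eq (lam : ℂ) (N : ℝ) (hN : 0 ≤ N) :
    (∫ x in Metric.closedBall (0 : EuclideanSpace ℝ (Fin 3)) N,
          ((‖x‖ : ℂ) ^ 2 - lam)⁻¹)
    = 4 * (Real.pi : ℂ) * ∫ r in (0:ℝ)..N, (r:ℂ)^2 * (((r:ℂ))^2 - lam)⁻¹ := by
  set g : ℝ → ℂ := Set.indicator (Set.Iic N) (fun r => ((r:ℂ)^2 - lam)⁻¹) with hg
  have h1 : (∫ x in Metric.closedBall (0 : EuclideanSpace ℝ (Fin 3)) N,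
          ((‖x‖ : ℂ) ^ 2 - lam)⁻¹) = ∫ x : EuclideanSpace ℝ (Fin 3), g ‖x‖ := by
    rw [← integral_indicator (measurableSet_closedBall)]
    congr 1
    ext x
    by_cases h : ‖x‖ ≤ N
    · rw [Set.indicator_of_mem (by simpa [Metric.mem_closedBall, dist_zero_right] using h),
        hg, Set.indicator_of_mem (by simpa using h)]
    · rw [Set.indicator_of_notMem (by simpa [Metric.mem_closedBall, dist_zero_right] using h),
        hg, Set.indicator_of_notMem (by simpa using h)]
  rw [h1, integral_fun_norm_addHaar volume g]
  have hdim : Module.finrank ℝ (EuclideanSpace ℝ (Fin 3)) = 3 := by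
    simp [finrank_euclideanSpace]
  rw [hdim]
  have hvol : (volume (Metric.ball (0 : EuclideanSpace ℝ (Fin 3)) 1)).toReal
      = 4 * Real.pi / 3 := by
    rw [EuclideanSpace.volume_ball]
    simp only [Fintype.card_fin]
    rw [ENNReal.toReal_mul]
    have hΓ : Real.Gamma ((3:ℕ) / 2 + 1) = 3 / 4 * Real.sqrt Real.pi := by
      have : ((3:ℕ):ℝ) / 2 + 1 = 3/2 + 1 := by norm_num
      rw [this, Real.Gamma_add_one (by norm_num)]
      have : (3:ℝ)/2 = 1/2 + 1 := by norm_num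
      rw [this, Real.Gamma_add_one (by norm_num), Real.Gamma_one_half_eq]
      ring
    rw [hΓ]
    have hs : Real.sqrt Real.pi ^ 3 / (3 / 4 * Real.sqrt Real.pi) = 4 * Real.pi / 3 := by
      have h2 : Real.sqrt Real.pi ^ 2 = Real.pi := Real.sq_sqrt Real.pi_pos.le
      have hne : Real.sqrt Real.pi ≠ 0 := by positivity
      have h3 : Real.sqrt Real.pi ^ 3 = Real.pi * Real.sqrt Real.pi := by
        rw [pow_succ, h2]
      rw [h3]
      field_simp
    rw [hs]
    simp [ENNReal.toReal_ofReal (by positivity : (0:ℝ) ≤ 4 * Real.pi / 3)]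
  rw [measureReal_def, hvol]
  have h2 : (∫ y in Set.Ioi (0:ℝ), y ^ (3-1) • g y)
      = ∫ r in (0:ℝ)..N, (r:ℂ)^2 * (((r:ℂ))^2 - lam)⁻¹ := by
    have : ∀ y : ℝ, y ^ (3-1) • g y
        = Set.indicator (Set.Iic N) (fun r : ℝ => (r:ℂ)^2 * (((r:ℂ))^2 - lam)⁻¹) y := by
      intro y
      by_cases h : y ∈ Set.Iic N
      · rw [hg, Set.indicator_of_mem h, Set.indicator_of_mem h]
        rw [Complex.real_smul]
        push_cast
        ring
      · rw [hg, Set.indicator_of_notMem h, Set.indicator_of_notMem h, smul_zero]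
    simp_rw [this]
    rw [setIntegral_indicator measurableSet_Iic]
    have : Set.Ioi (0:ℝ) ∩ Set.Iic N = Set.Ioc 0 N := by
      ext y; simp [Set.mem_Ioc, and_comm]
    rw [this, intervalIntegral.integral_of_le hN]
  rw [h2]
  rw [nsmul_eq_mul, Complex.real_smul]
  push_cast
  ring

lemma hasDerivAt_F (lam a : ℂ) (ha2 : a^2 = lam) (haim : 0 < a.im) (r : ℝ) :
    HasDerivAt (fun r : ℝ => (2*a)⁻¹ * (Complex.log (r - a) - Complex.log (r + a)))
      (((r:ℂ)^2 - lam)⁻¹) r := by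
  have hs1 : ((r:ℂ) - a) ∈ Complex.slitPlane := by
    right; simp [Complex.sub_im, haim.ne']
  have hs2 : ((r:ℂ) + a) ∈ Complex.slitPlane := by
    right; simp [Complex.add_im, haim.ne']
  have hne1 : ((r:ℂ) - a) ≠ 0 := Complex.slitPlane_ne_zero hs1
  have hne2 : ((r:ℂ) + a) ≠ 0 := Complex.slitPlane_ne_zero hs2
  have ha : a ≠ 0 := by
    intro h; rw [h] at haim; simp at haim
  have d1 : HasDerivAt (fun z : ℂ => Complex.log (z - a)) (((r:ℂ) - a)⁻¹) (r:ℂ) := by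
    simpa [Function.comp_def] using (Complex.hasDerivAt_log hs1).comp (r:ℂ) ((hasDerivAt_id (r:ℂ)).sub_const a)
  have d2 : HasDerivAt (fun z : ℂ => Complex.log (z + a)) (((r:ℂ) + a)⁻¹) (r:ℂ) := by
    simpa [Function.comp_def] using (Complex.hasDerivAt_log hs2).comp (r:ℂ) ((hasDerivAt_id (r:ℂ)).add_const a)
  have d : HasDerivAt (fun z : ℂ => (2*a)⁻¹ * (Complex.log (z - a) - Complex.log (z + a)))
      ((2*a)⁻¹ * (((r:ℂ) - a)⁻¹ - ((r:ℂ) + a)⁻¹)) (r:ℂ) := ((d1.sub d2).const_mul _)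
  have := d.comp_ofReal
  convert this using 1
  have hfact : (r:ℂ)^2 - lam = ((r:ℂ) - a) * ((r:ℂ) + a) := by rw [← ha2]; ring
  rw [hfact]
  field_simp
  ring

lemma log_diff_tendsto (a : ℂ) (haim : 0 < a.im) :
    Tendsto (fun N : ℝ => Complex.log (N - a) - Complex.log (N + a)) atTop (nhds 0) := by
  have ha : a ≠ 0 := by intro h; rw [h] at haim; simp at haim
  have key : ∀ᶠ N : ℝ in atTop,
      Complex.log (N - a) - Complex.log (N + a)
        = Complex.log (1 - a * (N:ℂ)⁻¹) - Complex.log (1 + a * (N:ℂ)⁻¹) := by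
    filter_upwards [eventually_gt_atTop 0] with N hN
    have hNne : (N:ℂ) ≠ 0 := by exact_mod_cast hN.ne'
    have h1 : (N:ℂ) - a = (N:ℝ) * (1 - a * (N:ℂ)⁻¹) := by field_simp
    have h2 : (N:ℂ) + a = (N:ℝ) * (1 + a * (N:ℂ)⁻¹) := by field_simp
    have hz1 : (1 - a * (N:ℂ)⁻¹) ≠ 0 := by
      intro h
      have : (1 - a * (N:ℂ)⁻¹).im = 0 := by rw [h]; simp
      simp only [Complex.sub_im, Complex.one_im, Complex.mul_im, Complex.inv_im,
        Complex.ofReal_im, Complex.ofReal_re, Complex.inv_re] at this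
      have hsq : Complex.normSq (N:ℂ) = N^2 := by simp [Complex.normSq_apply]; ring
      rw [hsq] at this
      simp at this
      rcases this with h' | h'
      · nlinarith [haim]
      · nlinarith
    have hz2 : (1 + a * (N:ℂ)⁻¹) ≠ 0 := by
      intro h
      have : (1 + a * (N:ℂ)⁻¹).im = 0 := by rw [h]; simp
      simp only [Complex.add_im, Complex.one_im, Complex.mul_im, Complex.inv_im,
        Complex.ofReal_im, Complex.ofReal_re, Complex.inv_re] at this
      have hsq : Complex.normSq (N:ℂ) = N^2 := by simp [Complex.normSq_apply]; ring
      rw [hsq] at this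
      simp at this
      rcases this with h' | h'
      · nlinarith [haim]
      · nlinarith
    rw [h1, h2, Complex.log_ofReal_mul hN hz1, Complex.log_ofReal_mul hN hz2]
    ring
  rw [show (0:ℂ) = Complex.log 1 - Complex.log 1 by simp]
  apply Tendsto.congr' (key.mono fun N h => h.symm)
  have hinv : Tendsto (fun N : ℝ => a * (N:ℂ)⁻¹) atTop (nhds 0) := by
    have h0 : Tendsto (fun N : ℝ => ((N⁻¹ : ℝ) : ℂ)) atTop (nhds ((0:ℝ):ℂ)) :=
      (Complex.continuous_ofReal.tendsto _).comp tendsto_inv_atTop_zero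
    simp only [Complex.ofReal_inv, Complex.ofReal_zero] at h0
    simpa using h0.const_mul a
  have hc : ContinuousAt Complex.log 1 := continuousAt_clog Complex.one_mem_slitPlane
  have t1 : Tendsto (fun N : ℝ => Complex.log (1 - a * (N:ℂ)⁻¹)) atTop
      (nhds (Complex.log 1)) := by
    apply hc.tendsto.comp
    simpa using ((tendsto_const_nhds (x := (1:ℂ))).sub hinv)
  have t2 : Tendsto (fun N : ℝ => Complex.log (1 + a * (N:ℂ)⁻¹)) atTop
      (nhds (Complex.log 1)) := by
    apply hc.tendsto.comp
    simpa using ((tendsto_const_nhds (x := (1:ℂ))).add hinv)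
  exact t1.sub t2

lemma log_neg_sub_log (a : ℂ) (haim : 0 < a.im) :
    Complex.log (-a) - Complex.log a = -(Real.pi : ℂ) * Complex.I := by
  rw [Complex.log, Complex.log, Complex.arg_neg_eq_arg_sub_pi_of_im_pos haim, norm_neg]
  push_cast
  ring

/-- For `λ ∉ [0,∞)`,
`∫_{‖x‖ ≤ N, x ∈ ℝ³} 1/(‖x‖² − λ) dx − 4πN  →  2π² i √λ` as `N → ∞`. -/
theorem stmt0 (lam : ℂ) (hlam : ∀ t : ℝ, 0 ≤ t → lam ≠ (t : ℂ)) :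
    Tendsto (fun N : ℝ =>
        (∫ x in Metric.closedBall (0 : EuclideanSpace ℝ (Fin 3)) N,
          ((‖x‖ : ℂ) ^ 2 - lam)⁻¹) - 4 * (Real.pi : ℂ) * (N : ℂ))
      atTop (nhds (2 * (Real.pi : ℂ) ^ 2 * Complex.I * sqrtUpper lam)) := by
  set a := sqrtUpper lam with ha
  have haim : 0 < a.im := sqrtUpper_im_pos hlam
  have ha2 : a ^ 2 = lam := sqrtUpper_sq hlam
  have hane : a ≠ 0 := by intro h; rw [h] at haim; simp at haim
  set F : ℝ → ℂ := fun r => (2*a)⁻¹ * (Complex.log (r - a) - Complex.log (r + a)) with hF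
  have h3 : ∀ r : ℝ, (r:ℂ)^2 - lam ≠ 0 := by
    intro r h
    apply hlam (r^2) (sq_nonneg r)
    push_cast
    linear_combination -h
  have hcont : Continuous (fun r : ℝ => ((r:ℂ)^2 - lam)⁻¹) := by
    apply Continuous.inv₀ _ h3
    exact (Complex.continuous_ofReal.pow 2).sub continuous_const
  have hderiv : ∀ r : ℝ, HasDerivAt F (((r:ℂ)^2 - lam)⁻¹) r :=
    fun r => hasDerivAt_F lam a ha2 haim r
  have hint : ∀ N : ℝ, (∫ r in (0:ℝ)..N, ((r:ℂ)^2 - lam)⁻¹) = F N - F 0 := by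
    intro N
    exact intervalIntegral.integral_eq_sub_of_hasDerivAt (fun r _ => hderiv r)
      (hcont.intervalIntegrable _ _)
  have hint2 : ∀ N : ℝ, (∫ r in (0:ℝ)..N, (r:ℂ)^2 * ((r:ℂ)^2 - lam)⁻¹)
      = N + lam * (F N - F 0) := by
    intro N
    have heq : ∀ r : ℝ, (r:ℂ)^2 * ((r:ℂ)^2 - lam)⁻¹ = 1 + lam * ((r:ℂ)^2 - lam)⁻¹ := by
      intro r
      field_simp [h3 r]
      ring
    rw [intervalIntegral.integral_congr (fun r _ => heq r)]
    rw [intervalIntegral.integral_add (intervalIntegrable_const)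
      ((hcont.intervalIntegrable _ _).const_mul lam)]
    rw [intervalIntegral.integral_const_mul, hint N]
    simp [Complex.real_smul]
  have hkey : ∀ᶠ N : ℝ in atTop,
      (∫ x in Metric.closedBall (0 : EuclideanSpace ℝ (Fin 3)) N,
          ((‖x‖ : ℂ) ^ 2 - lam)⁻¹) - 4 * (Real.pi : ℂ) * (N : ℂ)
        = 4 * (Real.pi : ℂ) * lam * (F N - F 0) := by
    filter_upwards [eventually_ge_atTop 0] with N hN
    rw [ball_integral_eq lam N hN, hint2 N]
    ring
  have hFlim : Tendsto F atTop (nhds 0) := by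
    have h := (log_diff_tendsto a haim).const_mul (2*a)⁻¹
    rw [mul_zero] at h
    exact h
  have hmain : Tendsto (fun N : ℝ => 4 * (Real.pi : ℂ) * lam * (F N - F 0)) atTop
      (nhds (4 * (Real.pi : ℂ) * lam * (0 - F 0))) :=
    ((hFlim.sub tendsto_const_nhds).const_mul _)
  have hval : 4 * (Real.pi : ℂ) * lam * (0 - F 0)
      = 2 * (Real.pi : ℂ) ^ 2 * Complex.I * a := by
    have hF0 : F 0 = (2*a)⁻¹ * (-(Real.pi : ℂ) * Complex.I) := by
      rw [hF]
      simp only [Complex.ofReal_zero, zero_sub, zero_add]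
      rw [log_neg_sub_log a haim]
    rw [hF0, ← ha2]
    field_simp
    ring
  rw [← hval]
  exact Tendsto.congr' (hkey.mono fun N h => h.symm) hmain
end

section
/- For every complex number λ not lying in [0,∞), the limit as N → ∞ of ( ∫_{x ∈ ℝ², ‖x‖ ≤ N} 1/(‖x‖² − λ) dx − 2π log N ) exists and equals −π Log(−λ), where Log is the principal branch of the complex logarithm. -/
open MeasureTheory Filter Complex Set

lemma memSlit (lam : ℂ) (hlam : ∀ t : ℝ, 0 ≤ t → lam ≠ (t : ℂ)) (r : ℝ) :
    (r : ℂ) ^ 2 - lam ∈ Complex.slitPlane := by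
  rw [Complex.mem_slitPlane_iff]
  by_cases him : lam.im = 0
  · left
    have hre : lam.re < 0 := by
      by_contra h
      push_neg at h
      exact hlam lam.re h (by apply Complex.ext <;> simp [him])
    simp only [Complex.sub_re, pow_two, Complex.mul_re, Complex.ofReal_re, Complex.ofReal_im]
    nlinarith [sq_nonneg r]
  · right
    simp only [Complex.sub_im, pow_two, Complex.mul_im, Complex.ofReal_re, Complex.ofReal_im]
    simpa using him

lemma lemA (lam : ℂ) (hlam : ∀ t : ℝ, 0 ≤ t → lam ≠ (t : ℂ)) (N : ℝ) (hN : 0 < N) :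
    ∫ x in Metric.closedBall (0 : EuclideanSpace ℝ (Fin 2)) N, ((‖x‖ : ℂ) ^ 2 - lam)⁻¹
      = (Real.pi : ℂ) * (Complex.log ((N : ℂ) ^ 2 - lam) - Complex.log (-lam)) := by
  have hne : ∀ r : ℝ, (r : ℂ) ^ 2 - lam ≠ 0 :=
    fun r => Complex.slitPlane_ne_zero (memSlit lam hlam r)
  set g : ℝ → ℂ := fun y => ((y : ℂ) ^ 2 - lam)⁻¹ with hg
  have h1 : ∫ x in Metric.closedBall (0 : EuclideanSpace ℝ (Fin 2)) N, ((‖x‖ : ℂ) ^ 2 - lam)⁻¹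
      = ∫ x : EuclideanSpace ℝ (Fin 2), (Set.Iic N).indicator g ‖x‖ := by
    rw [← MeasureTheory.integral_indicator (measurableSet_closedBall)]
    congr 1
    ext x
    by_cases hx : ‖x‖ ≤ N
    · rw [Set.indicator_of_mem (by simpa using hx), Set.indicator_of_mem (by simpa using hx)]
    · rw [Set.indicator_of_notMem (by simpa using hx), Set.indicator_of_notMem (by simpa using hx)]
  rw [h1, MeasureTheory.integral_fun_norm_addHaar volume ((Set.Iic N).indicator g)]
  have hdim : Module.finrank ℝ (EuclideanSpace ℝ (Fin 2)) = 2 := by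
    simp [finrank_euclideanSpace]
  have hvol : (volume (Metric.ball (0 : EuclideanSpace ℝ (Fin 2)) 1)).toReal = Real.pi := by
    rw [EuclideanSpace.volume_ball]
    simp only [Real.sq_sqrt Real.pi_nonneg, ENNReal.ofReal_one, one_pow, one_mul,
      Fintype.card_fin, Nat.cast_ofNat]
    rw [show ((2:ℝ)/2 + 1) = 2 by norm_num, Real.Gamma_two]
    simp [Real.pi_nonneg]
  rw [hdim, measureReal_def, hvol]
  have h2 : ∫ y in Set.Ioi (0:ℝ), y ^ (2 - 1) • (Set.Iic N).indicator g y
      = ∫ y in (0:ℝ)..N, (y:ℂ) * g y := by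
    have : ∀ y : ℝ, y ^ (2-1) • (Set.Iic N).indicator g y
        = (Set.Iic N).indicator (fun y => (y:ℂ) * g y) y := by
      intro y
      by_cases hy : y ∈ Set.Iic N
      · rw [Set.indicator_of_mem hy, Set.indicator_of_mem hy, pow_one, Complex.real_smul]
      · rw [Set.indicator_of_notMem hy, Set.indicator_of_notMem hy, smul_zero]
    simp_rw [this]
    rw [MeasureTheory.integral_indicator measurableSet_Iic,
      Measure.restrict_restrict measurableSet_Iic,
      intervalIntegral.integral_of_le hN.le]
    congr 1
    rw [Set.inter_comm, Set.Ioi_inter_Iic]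
  rw [h2]
  have hFTC : ∫ y in (0:ℝ)..N, (y:ℂ) * g y
      = (1/2 : ℂ) * Complex.log ((N:ℂ)^2 - lam) - (1/2 : ℂ) * Complex.log ((0:ℂ)^2 - lam) := by
    have hderiv : ∀ r ∈ Set.uIcc (0:ℝ) N,
        HasDerivAt (fun r : ℝ => (1/2 : ℂ) * Complex.log ((r:ℂ)^2 - lam)) ((r:ℂ) * g r) r := by
      intro r _
      have h1 : HasDerivAt (fun z : ℂ => z^2 - lam) (2 * (r:ℂ)) (r:ℂ) := by
        simpa using (hasDerivAt_pow 2 (r:ℂ)).sub_const lam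
      have h2 : HasDerivAt Complex.log ((r:ℂ)^2 - lam)⁻¹ ((r:ℂ)^2 - lam) :=
        Complex.hasDerivAt_log (memSlit lam hlam r)
      have h3 := (h2.comp (r:ℂ) h1).comp_ofReal
      have h4 := h3.const_mul (1/2 : ℂ)
      refine h4.congr_deriv ?_
      rw [hg]
      field_simp
    have hint : IntervalIntegrable (fun y : ℝ => (y:ℂ) * g y) volume 0 N := by
      apply Continuous.intervalIntegrable
      exact Complex.continuous_ofReal.mul
        (((Complex.continuous_ofReal.pow 2).sub continuous_const).inv₀ hne)
    have := intervalIntegral.integral_eq_sub_of_hasDerivAt hderiv hint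
    rw [this]
    push_cast
    ring
  rw [hFTC]
  have h0 : ((0:ℂ)^2 - lam) = -lam := by ring
  rw [h0]
  simp only [smul_eq_mul, nsmul_eq_mul, Complex.real_smul]
  push_cast
  ring
/-- For `λ ∉ [0,∞)`,
`∫_{‖x‖ ≤ N, x ∈ ℝ²} 1/(‖x‖² − λ) dx − 2π log N  →  −π Log(−λ)` as `N → ∞`,
where `Log` is the principal branch of the complex logarithm. -/
theorem stmt1 (lam : ℂ) (hlam : ∀ t : ℝ, 0 ≤ t → lam ≠ (t : ℂ)) :
    Tendsto (fun N : ℝ =>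
        (∫ x in Metric.closedBall (0 : EuclideanSpace ℝ (Fin 2)) N,
          ((‖x‖ : ℂ) ^ 2 - lam)⁻¹) - 2 * (Real.pi : ℂ) * (Real.log N : ℂ))
      atTop (nhds (-(Real.pi : ℂ) * Complex.log (-lam))) := by
  have heq : ∀ᶠ N : ℝ in atTop,
      (∫ x in Metric.closedBall (0 : EuclideanSpace ℝ (Fin 2)) N,
          ((‖x‖ : ℂ) ^ 2 - lam)⁻¹) - 2 * (Real.pi : ℂ) * (Real.log N : ℂ)
      = (Real.pi : ℂ) * Complex.log (1 - lam * ((N:ℂ)^2)⁻¹)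
        + (-(Real.pi : ℂ) * Complex.log (-lam)) := by
    filter_upwards [eventually_gt_atTop (0:ℝ)] with N hN
    rw [lemA lam hlam N hN]
    have hN2 : (0:ℝ) < N ^ 2 := by positivity
    have hx : (1 : ℂ) - lam * ((N:ℂ)^2)⁻¹ ≠ 0 := by
      intro h
      have hlamN : lam = ((N^2 : ℝ) : ℂ) := by
        have hNne : ((N:ℂ)^2) ≠ 0 := by
          simpa using pow_ne_zero 2 (Complex.ofReal_ne_zero.mpr hN.ne')
        rw [sub_eq_zero, ← div_eq_mul_inv, eq_div_iff hNne] at h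
        push_cast
        linear_combination -h
      exact hlam (N^2) hN2.le hlamN
    have hsplit : Complex.log ((N:ℂ)^2 - lam)
        = (Real.log (N^2) : ℂ) + Complex.log (1 - lam * ((N:ℂ)^2)⁻¹) := by
      have hfac : (N:ℂ)^2 - lam = ((N^2 : ℝ) : ℂ) * (1 - lam * ((N:ℂ)^2)⁻¹) := by
        have hNne : ((N:ℂ)^2) ≠ 0 := by
          simpa using pow_ne_zero 2 (Complex.ofReal_ne_zero.mpr hN.ne')
        push_cast
        rw [mul_sub, mul_one, mul_comm lam, ← mul_assoc, mul_inv_cancel₀ hNne, one_mul]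
      rw [hfac, Complex.log_ofReal_mul hN2 hx]
    rw [hsplit, Real.log_pow]
    push_cast
    ring
  rw [show (-(Real.pi : ℂ) * Complex.log (-lam))
      = (Real.pi : ℂ) * Complex.log 1 + (-(Real.pi : ℂ) * Complex.log (-lam)) by
    simp]
  refine Tendsto.congr' (heq.mono fun N h => h.symm) ?_
  apply Tendsto.add_const
  apply Tendsto.const_mul
  have t1 : Tendsto (fun N : ℝ => (1:ℂ) - lam * ((N:ℂ)^2)⁻¹) atTop (nhds 1) := by
    have h2 : Tendsto (fun N : ℝ => lam * ((N:ℂ)^2)⁻¹) atTop (nhds 0) := by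
      have h3 : Tendsto (fun N : ℝ => ((N^2)⁻¹ : ℝ)) atTop (nhds 0) :=
        (tendsto_pow_atTop two_ne_zero).inv_tendsto_atTop
      have h4 := (Complex.continuous_ofReal.tendsto 0).comp h3
      simp only [Complex.ofReal_zero] at h4
      have h5 : (fun N : ℝ => lam * ((N:ℂ)^2)⁻¹)
          = fun N : ℝ => lam * (((N^2)⁻¹ : ℝ) : ℂ) := by
        funext N; push_cast; ring
      rw [h5]
      simpa using (h4.const_mul lam)
    simpa using (tendsto_const_nhds (x := (1:ℂ)) (f := atTop)).sub h2
  exact t1.clog Complex.one_mem_slitPlane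
end

section
/- For every complex number λ not lying in [0,∞), the following Lebesgue integrals converge and have the stated values: ∫_{ℝ³} 1/(‖x‖² − λ)² dx = iπ²/√λ, ∫_{ℝ²} 1/(‖x‖² − λ)² dx = −π/λ, and ∫_{ℝ} 1/(x² − λ)² dx = −iπ/(2(√λ)³). -/
open MeasureTheory

namespace Stmt6Aux

open Complex Filter Set Metric Topology

variable {a : ℂ}

lemma a_ne (ha : 0 < a.re) : a ≠ 0 := fun h => by simp [h] at ha

lemma ne_zero_of_im {z : ℂ} (h : z.im ≠ 0) : z ≠ 0 := fun h0 => h (by simp [h0])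

lemma sq_ne (ha : 0 < a.re) (r : ℝ) : (r : ℂ) ^ 2 + a ^ 2 ≠ 0 := by
  intro h
  rw [Complex.ext_iff] at h
  simp only [Complex.add_re, Complex.add_im, Complex.zero_re, Complex.zero_im,
    pow_two, Complex.mul_re, Complex.mul_im, Complex.ofReal_re, Complex.ofReal_im] at h
  obtain ⟨h1, h2⟩ := h
  have him : a.im = 0 := by nlinarith
  nlinarith

lemma ne1 (ha : 0 < a.re) (r : ℝ) : (r : ℂ) + -(Complex.I * a) ≠ 0 :=
  ne_zero_of_im (by simp [ha.ne'])

lemma ne2 (ha : 0 < a.re) (r : ℝ) : (r : ℂ) + Complex.I * a ≠ 0 :=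
  ne_zero_of_im (by simp [ha.ne'])

lemma mul_fac (ha : 0 < a.re) (r : ℝ) :
    ((r : ℂ) + -(Complex.I * a)) * ((r : ℂ) + Complex.I * a) = (r : ℂ) ^ 2 + a ^ 2 := by
  linear_combination (-(a ^ 2) : ℂ) * Complex.I_sq

/-- Antiderivative of `1/(r² + a²)`. -/
noncomputable def F1 (a : ℂ) (r : ℝ) : ℂ :=
  (2 * Complex.I * a)⁻¹ *
    (Complex.log ((r : ℂ) + -(Complex.I * a)) - Complex.log ((r : ℂ) + Complex.I * a))

lemma hasDerivAt_log_aff (c : ℂ) (hc : c.im ≠ 0) (r : ℝ) :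
    HasDerivAt (fun x : ℝ => Complex.log ((x : ℂ) + c)) (((r : ℂ) + c)⁻¹) r := by
  have h1 : ((r : ℂ) + c) ∈ Complex.slitPlane := Or.inr (by simpa using hc)
  have h2 : HasDerivAt (fun z : ℂ => Complex.log (z + c)) (((r : ℂ) + c)⁻¹) (r : ℂ) := by
    simpa [Function.comp_def] using (Complex.hasDerivAt_log h1).comp (r : ℂ) ((hasDerivAt_id ((r : ℂ))).add_const c)
  exact h2.comp_ofReal

lemma hasDerivAt_F1 (ha : 0 < a.re) (r : ℝ) :
    HasDerivAt (F1 a) (((r : ℂ) ^ 2 + a ^ 2)⁻¹) r := by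
  have him1 : (-(Complex.I * a)).im ≠ 0 := by simp [ha.ne']
  have him2 : (Complex.I * a).im ≠ 0 := by simp [ha.ne']
  have h := ((hasDerivAt_log_aff _ him1 r).sub (hasDerivAt_log_aff _ him2 r)).const_mul
    ((2 * Complex.I * a)⁻¹)
  convert h using 1
  · rfl
  · rfl
  have hz1 := ne1 ha r
  have hz2 := ne2 ha r
  have hIa : (2 : ℂ) * Complex.I * a ≠ 0 := by
    simp [Complex.I_ne_zero, a_ne ha]
  rw [← mul_fac ha r]
  have := a_ne ha
  field_simp
  ring

lemma tendsto_logdiff (ha : 0 < a.re) :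
    Tendsto (fun r : ℝ =>
      Complex.log ((r : ℂ) + -(Complex.I * a)) - Complex.log ((r : ℂ) + Complex.I * a))
      atTop (𝓝 0) := by
  have hinv : Tendsto (fun r : ℝ => ((r : ℂ))⁻¹) atTop (𝓝 0) := by
    have : Tendsto (fun r : ℝ => ((r⁻¹ : ℝ) : ℂ)) atTop (𝓝 ((0 : ℝ) : ℂ)) :=
      (Complex.continuous_ofReal.tendsto _).comp tendsto_inv_atTop_zero
    simpa using this
  have key : ∀ c : ℂ, Tendsto (fun r : ℝ => Complex.log (1 + c * ((r : ℂ))⁻¹)) atTop (𝓝 0) := by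
    intro c
    have h1 : Tendsto (fun r : ℝ => (1 + c * ((r : ℂ))⁻¹ : ℂ)) atTop (𝓝 1) := by
      have := (hinv.const_mul c).const_add 1
      simpa using this
    have hcont : ContinuousAt Complex.log 1 :=
      continuousAt_clog (Or.inl (by norm_num))
    have := hcont.tendsto.comp h1
    simpa [Complex.log_one, Function.comp_def] using this
  have hev : (fun r : ℝ =>
      Complex.log ((r : ℂ) + -(Complex.I * a)) - Complex.log ((r : ℂ) + Complex.I * a))
        =ᶠ[atTop] fun r : ℝ => Complex.log (1 + -(Complex.I * a) * ((r : ℂ))⁻¹)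
          - Complex.log (1 + Complex.I * a * ((r : ℂ))⁻¹) := by
    filter_upwards [eventually_gt_atTop (0 : ℝ)] with r hr
    have hr' : ((r : ℂ)) ≠ 0 := by exact_mod_cast hr.ne'
    have e1 : ((r : ℂ) + -(Complex.I * a)) = (r : ℝ) * (1 + -(Complex.I * a) * ((r : ℂ))⁻¹) := by
      field_simp
    have e2 : ((r : ℂ) + Complex.I * a) = (r : ℝ) * (1 + Complex.I * a * ((r : ℂ))⁻¹) := by
      field_simp
    have hz1 : (1 + -(Complex.I * a) * ((r : ℂ))⁻¹ : ℂ) ≠ 0 := by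
      intro h
      apply ne1 ha r
      rw [e1, h, mul_zero]
    have hz2 : (1 + Complex.I * a * ((r : ℂ))⁻¹ : ℂ) ≠ 0 := by
      intro h
      apply ne2 ha r
      rw [e2, h, mul_zero]
    rw [e1, e2, Complex.log_ofReal_mul hr hz1, Complex.log_ofReal_mul hr hz2]
    ring
  have h := ((key (-(Complex.I * a))).sub (key (Complex.I * a)))
  rw [sub_zero] at h
  exact Filter.Tendsto.congr' hev.symm h

lemma tendsto_F1_top (ha : 0 < a.re) : Tendsto (F1 a) atTop (𝓝 0) := by
  have h := (tendsto_logdiff ha).const_mul ((2 * Complex.I * a)⁻¹)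
  rw [mul_zero] at h
  exact h

lemma log_neg_im_pos {z : ℂ} (h : 0 < z.im) :
    Complex.log (-z) = Complex.log z - Real.pi * Complex.I := by
  apply Complex.ext <;>
    simp [Complex.log_re, Complex.log_im, Complex.arg_neg_eq_arg_sub_pi_of_im_pos h]

lemma log_neg_im_neg {z : ℂ} (h : z.im < 0) :
    Complex.log (-z) = Complex.log z + Real.pi * Complex.I := by
  apply Complex.ext <;>
    simp [Complex.log_re, Complex.log_im, Complex.arg_neg_eq_arg_add_pi_of_im_neg h]

lemma logdiff_zero (ha : 0 < a.re) :
    Complex.log (-(Complex.I * a)) - Complex.log (Complex.I * a)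
      = -(Real.pi : ℂ) * Complex.I := by
  have him : 0 < (Complex.I * a).im := by simpa using ha
  rw [log_neg_im_pos him]
  ring

lemma F1_zero (ha : 0 < a.re) : F1 a 0 = -(Real.pi : ℂ) / (2 * a) := by
  have h : F1 a 0 = (2 * Complex.I * a)⁻¹ *
      (Complex.log (-(Complex.I * a)) - Complex.log (Complex.I * a)) := by
    simp [F1]
  rw [h, logdiff_zero ha]
  have ha0 := a_ne ha
  field_simp

lemma tendsto_F1_bot (ha : 0 < a.re) :
    Tendsto (F1 a) atBot (𝓝 (-(Real.pi : ℂ) / a)) := by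
  have hid : ∀ s : ℝ, F1 a (-s) =
      (2 * Complex.I * a)⁻¹ *
        (-(Complex.log ((s : ℂ) + -(Complex.I * a)) - Complex.log ((s : ℂ) + Complex.I * a))
          - 2 * Real.pi * Complex.I) := by
    intro s
    have him1 : 0 < ((s : ℂ) + Complex.I * a).im := by simpa using ha
    have him2 : ((s : ℂ) + -(Complex.I * a)).im < 0 := by simpa using ha
    have e1 : ((-s : ℝ) : ℂ) + -(Complex.I * a) = -((s : ℂ) + Complex.I * a) := by
      push_cast; ring
    have e2 : ((-s : ℝ) : ℂ) + Complex.I * a = -((s : ℂ) + -(Complex.I * a)) := by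
      push_cast; ring
    rw [F1, e1, e2, log_neg_im_pos him1, log_neg_im_neg him2]
    ring
  have htop : Tendsto (fun s : ℝ => F1 a (-s)) atTop
      (𝓝 ((2 * Complex.I * a)⁻¹ * (-(0 : ℂ) - 2 * Real.pi * Complex.I))) := by
    apply Tendsto.congr (fun s => (hid s).symm)
    exact (((tendsto_logdiff ha).neg.sub_const _).const_mul _)
  have hval : (2 * Complex.I * a)⁻¹ * (-(0 : ℂ) - 2 * Real.pi * Complex.I)
      = -(Real.pi : ℂ) / a := by
    have ha0 := a_ne ha
    field_simp
    ring
  have h2 := htop.comp tendsto_neg_atBot_atTop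
  simp only [Function.comp_def, neg_neg] at h2
  rw [← hval]
  exact h2

/-! ### Integrability bounds -/

lemma abs_lower (ha : 0 < a.re) :
    ∃ ε : ℝ, 0 < ε ∧ ∀ t : ℝ, 0 ≤ t → ε ≤ ‖(t : ℂ) + a ^ 2‖ := by
  rcases eq_or_ne a.im 0 with him | him
  · refine ⟨a.re ^ 2, by positivity, fun t ht => ?_⟩
    have he : ((t : ℂ) + a ^ 2) = ((t + a.re ^ 2 : ℝ) : ℂ) := by
      apply Complex.ext <;> simp [pow_two, Complex.mul_re, Complex.mul_im, him]
    rw [he, Complex.norm_real, Real.norm_eq_abs, _root_.abs_of_nonneg (by positivity)]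
    linarith
  · refine ⟨|2 * a.re * a.im|, by positivity, fun t ht => ?_⟩
    have h1 : |((t : ℂ) + a ^ 2).im| ≤ ‖(t : ℂ) + a ^ 2‖ :=
      Complex.abs_im_le_norm _
    have h2 : ((t : ℂ) + a ^ 2).im = 2 * a.re * a.im := by
      simp [pow_two, Complex.mul_im]; ring
    rw [h2] at h1
    exact h1

lemma abs_lower' (ha : 0 < a.re) :
    ∃ C : ℝ, 0 < C ∧ ∀ r : ℝ, 1 + r ^ 2 ≤ C * ‖(r : ℂ) ^ 2 + a ^ 2‖ := by
  obtain ⟨ε, hε, hbd⟩ := abs_lower ha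
  set A := ‖a ^ 2‖ with hA
  have hA0 : 0 ≤ A := norm_nonneg _
  refine ⟨max 2 ((2 + 2 * A) / ε), lt_of_lt_of_le two_pos (le_max_left _ _), fun r => ?_⟩
  have habs : ε ≤ ‖(r : ℂ) ^ 2 + a ^ 2‖ := by
    have := hbd (r ^ 2) (sq_nonneg r)
    simpa [Complex.ofReal_pow] using this
  have habs0 : 0 ≤ ‖(r : ℂ) ^ 2 + a ^ 2‖ := norm_nonneg _
  by_cases hr : r ^ 2 ≤ 2 * A + 1
  · calc 1 + r ^ 2 ≤ 2 + 2 * A := by linarith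
      _ = ((2 + 2 * A) / ε) * ε := by field_simp
      _ ≤ ((2 + 2 * A) / ε) * ‖(r : ℂ) ^ 2 + a ^ 2‖ := by
          apply mul_le_mul_of_nonneg_left habs (by positivity)
      _ ≤ max 2 ((2 + 2 * A) / ε) * ‖(r : ℂ) ^ 2 + a ^ 2‖ := by
          apply mul_le_mul_of_nonneg_right (le_max_right _ _) habs0
  · push_neg at hr
    have tri : (r ^ 2 : ℝ) - A ≤ ‖(r : ℂ) ^ 2 + a ^ 2‖ := by
      have h1 := norm_add_le ((r : ℂ) ^ 2 + a ^ 2) (-(a ^ 2))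
      have h2 : ‖(r : ℂ) ^ 2‖ = r ^ 2 := by
        rw [← Complex.ofReal_pow, Complex.norm_real, Real.norm_eq_abs, _root_.abs_of_nonneg (sq_nonneg r)]
      simp only [add_neg_cancel_right, norm_neg] at h1
      rw [h2] at h1
      linarith
    calc 1 + r ^ 2 ≤ 2 * (r ^ 2 - A) := by linarith
      _ ≤ 2 * ‖(r : ℂ) ^ 2 + a ^ 2‖ := by linarith
      _ ≤ max 2 ((2 + 2 * A) / ε) * ‖(r : ℂ) ^ 2 + a ^ 2‖ := by
          apply mul_le_mul_of_nonneg_right (le_max_left _ _) habs0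

lemma abs_pos' (ha : 0 < a.re) (r : ℝ) : 0 < ‖(r : ℂ) ^ 2 + a ^ 2‖ :=
  norm_pos_iff.mpr (sq_ne ha r)

lemma integrable_of_bound (φ : ℝ → ℂ) (hc : Continuous φ) (K : ℝ)
    (h : ∀ x : ℝ, ‖φ x‖ ≤ K * (1 + x ^ 2)⁻¹) : Integrable φ :=
  (integrable_inv_one_add_sq.const_mul K).mono' hc.aestronglyMeasurable (ae_of_all _ h)

lemma cont_inv (ha : 0 < a.re) :
    Continuous fun r : ℝ => (((r : ℂ) ^ 2 + a ^ 2))⁻¹ :=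
  ((Complex.continuous_ofReal.pow 2).add continuous_const).inv₀ (fun r => sq_ne ha r)

lemma cont_inv_sq (ha : 0 < a.re) :
    Continuous fun r : ℝ => ((((r : ℂ) ^ 2 + a ^ 2)) ^ 2)⁻¹ :=
  (((Complex.continuous_ofReal.pow 2).add continuous_const).pow 2).inv₀
    (fun r => pow_ne_zero _ (sq_ne ha r))

lemma abs_inv_le (ha : 0 < a.re) :
    ∃ C : ℝ, 0 < C ∧ ∀ x : ℝ,
      (‖(x : ℂ) ^ 2 + a ^ 2‖)⁻¹ ≤ C * (1 + x ^ 2)⁻¹ := by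
  obtain ⟨C, hC, hb⟩ := abs_lower' ha
  refine ⟨C, hC, fun x => ?_⟩
  have hp : (0 : ℝ) < 1 + x ^ 2 := by positivity
  have ht := abs_pos' ha x
  rw [show C * (1 + x ^ 2)⁻¹ = C / (1 + x ^ 2) by ring, le_div_iff₀ hp, inv_mul_eq_div,
    div_le_iff₀ ht]
  linarith [hb x]

lemma integrable_inv_one (ha : 0 < a.re) :
    Integrable fun r : ℝ => (((r : ℂ) ^ 2 + a ^ 2))⁻¹ := by
  obtain ⟨C, hC, hb⟩ := abs_inv_le ha
  refine integrable_of_bound _ (cont_inv ha) C fun x => ?_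
  rw [norm_inv]
  exact hb x

lemma integrable_pow_inv_sq (ha : 0 < a.re) (k : ℕ) (hk : k ≤ 2) :
    Integrable fun r : ℝ => (r : ℂ) ^ k * ((((r : ℂ) ^ 2 + a ^ 2)) ^ 2)⁻¹ := by
  obtain ⟨C, hC, hb⟩ := abs_inv_le ha
  refine integrable_of_bound _
    ((Complex.continuous_ofReal.pow k).mul (cont_inv_sq ha)) (C ^ 2) fun x => ?_
  have hp : (0 : ℝ) < 1 + x ^ 2 := by positivity
  have hxk : |x| ^ k ≤ 1 + x ^ 2 := by
    interval_cases k
    · simpa using by nlinarith [sq_nonneg x]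
    · nlinarith [sq_nonneg (|x| - 1), _root_.sq_abs x, abs_nonneg x]
    · rw [_root_.sq_abs]; nlinarith
  have hnorm : ‖(x : ℂ) ^ k * ((((x : ℂ) ^ 2 + a ^ 2)) ^ 2)⁻¹‖
      = |x| ^ k * ((‖(x : ℂ) ^ 2 + a ^ 2‖)⁻¹) ^ 2 := by
    simp [map_pow, map_inv₀, Complex.norm_real, Real.norm_eq_abs, inv_pow]
  rw [hnorm]
  have h2 : ((‖(x : ℂ) ^ 2 + a ^ 2‖)⁻¹) ^ 2 ≤ (C * (1 + x ^ 2)⁻¹) ^ 2 :=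
    pow_le_pow_left₀ (inv_nonneg.mpr (norm_nonneg _)) (hb x) 2
  calc |x| ^ k * ((‖(x : ℂ) ^ 2 + a ^ 2‖)⁻¹) ^ 2
      ≤ (1 + x ^ 2) * ((C * (1 + x ^ 2)⁻¹) ^ 2) :=
        mul_le_mul hxk h2 (by positivity) (by positivity)
    _ = C ^ 2 * (1 + x ^ 2)⁻¹ := by field_simp

/-! ### Limits of auxiliary functions -/

lemma tendsto_absdiv {l : Filter ℝ} (h : Tendsto (fun r : ℝ => |r|) l atTop) :
    Tendsto (fun r : ℝ => |r| / (1 + r ^ 2)) l (𝓝 0) := by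
  apply squeeze_zero (fun r => by positivity) (g := fun r : ℝ => |r|⁻¹)
  · intro r
    rcases eq_or_ne r 0 with rfl | hr
    · simp
    · have h1 : (0 : ℝ) < r ^ 2 := by positivity
      have h2 : |r| / (1 + r ^ 2) ≤ |r| / r ^ 2 :=
        div_le_div_of_nonneg_left (abs_nonneg r) h1 (by linarith)
      have h3 : |r| / r ^ 2 = |r|⁻¹ := by
        rw [← _root_.sq_abs]
        field_simp [abs_ne_zero.mpr hr]
      linarith [h2, h3.le]
  · exact tendsto_inv_atTop_zero.comp h

lemma tendsto_inv_top (ha : 0 < a.re) :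
    Tendsto (fun r : ℝ => (((r : ℂ) ^ 2 + a ^ 2))⁻¹) atTop (𝓝 0) := by
  obtain ⟨C, hC, hb⟩ := abs_inv_le ha
  have h1 : Tendsto (fun r : ℝ => 1 + r ^ 2) atTop atTop :=
    tendsto_atTop_add_const_left _ _ (tendsto_pow_atTop two_ne_zero)
  have hg : Tendsto (fun r : ℝ => C * (1 + r ^ 2)⁻¹) atTop (𝓝 0) := by
    have := (h1.inv_tendsto_atTop).const_mul C
    simpa using this
  refine squeeze_zero_norm (fun r => ?_) hg
  rw [norm_inv]
  exact hb r

lemma tendsto_ratio {l : Filter ℝ} (ha : 0 < a.re)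
    (h : Tendsto (fun r : ℝ => |r|) l atTop) :
    Tendsto (fun r : ℝ => (r : ℂ) * (((r : ℂ) ^ 2 + a ^ 2))⁻¹) l (𝓝 0) := by
  obtain ⟨C, hC, hb⟩ := abs_inv_le ha
  have hg : Tendsto (fun r : ℝ => C * (|r| / (1 + r ^ 2))) l (𝓝 0) := by
    have := (tendsto_absdiv h).const_mul C
    simpa using this
  refine squeeze_zero_norm (fun r => ?_) hg
  rw [norm_mul, norm_inv, Complex.norm_real, Real.norm_eq_abs]
  calc |r| * (‖(r : ℂ) ^ 2 + a ^ 2‖)⁻¹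
      ≤ |r| * (C * (1 + r ^ 2)⁻¹) :=
        mul_le_mul_of_nonneg_left (hb r) (abs_nonneg r)
    _ = C * (|r| / (1 + r ^ 2)) := by ring

/-! ### The antiderivative of `1/(r²+a²)²` -/

noncomputable def F2 (a : ℂ) (r : ℝ) : ℂ :=
  (2 * a ^ 2)⁻¹ * ((r : ℂ) * (((r : ℂ) ^ 2 + a ^ 2))⁻¹) + (2 * a ^ 2)⁻¹ * F1 a r

lemma hasDerivAt_inner (ha : 0 < a.re) (r : ℝ) :
    HasDerivAt (fun x : ℝ => (((x : ℂ) ^ 2 + a ^ 2))⁻¹)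
      (-(2 * (r : ℂ)) / (((r : ℂ) ^ 2 + a ^ 2)) ^ 2) r := by
  have h1 : HasDerivAt (fun z : ℂ => z ^ 2 + a ^ 2) (2 * (r : ℂ)) (r : ℂ) := by
    simpa using ((hasDerivAt_pow 2 ((r : ℂ))).add_const (a ^ 2))
  exact (h1.inv (sq_ne ha r)).comp_ofReal

lemma hasDerivAt_F2 (ha : 0 < a.re) (r : ℝ) :
    HasDerivAt (F2 a) (((((r : ℂ) ^ 2 + a ^ 2)) ^ 2)⁻¹) r := by
  have h1 : HasDerivAt (fun x : ℝ => (x : ℂ) * (((x : ℂ) ^ 2 + a ^ 2))⁻¹)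
      (1 * (((r : ℂ) ^ 2 + a ^ 2))⁻¹
        + (r : ℂ) * (-(2 * (r : ℂ)) / (((r : ℂ) ^ 2 + a ^ 2)) ^ 2)) r := by
    have hz : HasDerivAt (fun z : ℂ => z * ((z ^ 2 + a ^ 2))⁻¹)
        (1 * (((r : ℂ) ^ 2 + a ^ 2))⁻¹
          + (r : ℂ) * (-(2 * (r : ℂ)) / (((r : ℂ) ^ 2 + a ^ 2)) ^ 2)) (r : ℂ) := by
      have hinner : HasDerivAt (fun z : ℂ => z ^ 2 + a ^ 2) (2 * (r : ℂ)) (r : ℂ) := by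
        simpa using ((hasDerivAt_pow 2 ((r : ℂ))).add_const (a ^ 2))
      exact (hasDerivAt_id ((r : ℂ))).mul (hinner.inv (sq_ne ha r))
    exact hz.comp_ofReal
  have h := (h1.const_mul ((2 * a ^ 2)⁻¹)).add ((hasDerivAt_F1 ha r).const_mul ((2 * a ^ 2)⁻¹))
  convert h using 1
  · rfl
  · rfl
  have hD := sq_ne ha r
  have ha2 : a ≠ 0 := a_ne ha
  field_simp [hD, ha2]
  ring

lemma tendsto_F2_top (ha : 0 < a.re) : Tendsto (F2 a) atTop (𝓝 0) := by
  have h := ((tendsto_ratio ha tendsto_abs_atTop_atTop).const_mul ((2 * a ^ 2)⁻¹)).add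
    ((tendsto_F1_top ha).const_mul ((2 * a ^ 2)⁻¹))
  rw [show (2 * a ^ 2 : ℂ)⁻¹ * 0 + (2 * a ^ 2)⁻¹ * 0 = 0 by ring] at h
  exact h

lemma tendsto_F2_bot (ha : 0 < a.re) :
    Tendsto (F2 a) atBot (𝓝 ((2 * a ^ 2)⁻¹ * (-(Real.pi : ℂ) / a))) := by
  have h := ((tendsto_ratio ha tendsto_abs_atBot_atTop).const_mul ((2 * a ^ 2)⁻¹)).add
    ((tendsto_F1_bot ha).const_mul ((2 * a ^ 2)⁻¹))
  rw [show (2 * a ^ 2 : ℂ)⁻¹ * 0 + (2 * a ^ 2)⁻¹ * (-(Real.pi : ℂ) / a)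
    = (2 * a ^ 2)⁻¹ * (-(Real.pi : ℂ) / a) by ring] at h
  exact h

/-! ### The integral values -/

lemma int_one (ha : 0 < a.re) :
    ∫ r in Ioi (0 : ℝ), (((r : ℂ) ^ 2 + a ^ 2))⁻¹ = Real.pi / (2 * a) := by
  have h := MeasureTheory.integral_Ioi_of_hasDerivAt_of_tendsto' (a := (0 : ℝ))
    (fun x _ => hasDerivAt_F1 ha x) ((integrable_inv_one ha).integrableOn)
    (tendsto_F1_top ha)
  rw [h, F1_zero ha]
  ring

lemma integrable_inv_sq (ha : 0 < a.re) :
    Integrable fun r : ℝ => ((((r : ℂ) ^ 2 + a ^ 2)) ^ 2)⁻¹ := by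
  have h := integrable_pow_inv_sq ha 0 (by norm_num)
  simpa using h

lemma int_two (ha : 0 < a.re) :
    ∫ r in Ioi (0 : ℝ), ((((r : ℂ) ^ 2 + a ^ 2)) ^ 2)⁻¹ = Real.pi / (4 * a ^ 3) := by
  have h := MeasureTheory.integral_Ioi_of_hasDerivAt_of_tendsto' (a := (0 : ℝ))
    (fun x _ => hasDerivAt_F2 ha x) ((integrable_inv_sq ha).integrableOn)
    (tendsto_F2_top ha)
  have h0 : F2 a 0 = (2 * a ^ 2)⁻¹ * (-(Real.pi : ℂ) / (2 * a)) := by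
    rw [F2, F1_zero ha]
    norm_num
  rw [h, h0]
  have ha2 : a ≠ 0 := a_ne ha
  rw [zero_sub]
  field_simp [ha2]
  norm_num

lemma int_sq (ha : 0 < a.re) :
    ∫ r in Ioi (0 : ℝ), (r : ℂ) ^ 2 * ((((r : ℂ) ^ 2 + a ^ 2)) ^ 2)⁻¹
      = Real.pi / (4 * a) := by
  have hpt : ∀ r ∈ Ioi (0 : ℝ), (r : ℂ) ^ 2 * ((((r : ℂ) ^ 2 + a ^ 2)) ^ 2)⁻¹
      = (((r : ℂ) ^ 2 + a ^ 2))⁻¹ - a ^ 2 * ((((r : ℂ) ^ 2 + a ^ 2)) ^ 2)⁻¹ := by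
    intro r _
    have hD := sq_ne ha r
    field_simp [hD]
    ring
  rw [setIntegral_congr_fun measurableSet_Ioi hpt, integral_sub
    ((integrable_inv_one ha).integrableOn) (((integrable_inv_sq ha).const_mul _).integrableOn),
    MeasureTheory.integral_const_mul, int_one ha, int_two ha]
  have ha2 : a ≠ 0 := a_ne ha
  field_simp
  ring

lemma int_lin (ha : 0 < a.re) :
    ∫ r in Ioi (0 : ℝ), (r : ℂ) * ((((r : ℂ) ^ 2 + a ^ 2)) ^ 2)⁻¹ = (2 * a ^ 2)⁻¹ := by
  have hderiv : ∀ x : ℝ, HasDerivAt (fun r : ℝ => -(2 : ℂ)⁻¹ * (((r : ℂ) ^ 2 + a ^ 2))⁻¹)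
      ((x : ℂ) * ((((x : ℂ) ^ 2 + a ^ 2)) ^ 2)⁻¹) x := by
    intro x
    have h := (hasDerivAt_inner ha x).const_mul (-(2 : ℂ)⁻¹)
    convert h using 1
    · rfl
    have hD := sq_ne ha x
    field_simp [hD]
  have hlim : Tendsto (fun r : ℝ => -(2 : ℂ)⁻¹ * (((r : ℂ) ^ 2 + a ^ 2))⁻¹) atTop (𝓝 0) := by
    have := (tendsto_inv_top ha).const_mul (-(2 : ℂ)⁻¹)
    simpa using this
  have h := MeasureTheory.integral_Ioi_of_hasDerivAt_of_tendsto' (a := (0 : ℝ))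
    (fun x _ => hderiv x) ((integrable_pow_inv_sq ha 1 (by norm_num)).integrableOn.congr_fun
      (fun x _ => by norm_num) measurableSet_Ioi)
    hlim
  rw [h]
  have ha2 : a ≠ 0 := a_ne ha
  rw [zero_sub]
  field_simp [ha2]
  simp

lemma int_real (ha : 0 < a.re) :
    ∫ x : ℝ, ((((x : ℂ) ^ 2 + a ^ 2)) ^ 2)⁻¹ = Real.pi / (2 * a ^ 3) := by
  have h := MeasureTheory.integral_of_hasDerivAt_of_tendsto
    (fun x => hasDerivAt_F2 ha x) (integrable_inv_sq ha)
    (tendsto_F2_bot ha) (tendsto_F2_top ha)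
  rw [h]
  have ha2 : a ≠ 0 := a_ne ha
  rw [zero_sub]
  field_simp [ha2]

/-! ### Integrability on Euclidean spaces -/

lemma integrable_euclidean (ha : 0 < a.re) {ι : Type*} [Fintype ι] [Nonempty ι]
    (hcard : Fintype.card ι ≤ 3) :
    Integrable (fun x : EuclideanSpace ℝ ι => ((((‖x‖ : ℂ)) ^ 2 + a ^ 2) ^ 2)⁻¹) := by
  obtain ⟨C, hC, hb⟩ := abs_inv_le ha
  have hfr : (Module.finrank ℝ (EuclideanSpace ℝ ι) : ℝ) < 4 := by
    rw [finrank_euclideanSpace]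
    exact_mod_cast lt_of_le_of_lt hcard (by norm_num)
  refine ((integrable_one_add_norm (μ := (volume : Measure (EuclideanSpace ℝ ι))) hfr).const_mul
    (4 * C ^ 2)).mono' ?_ (ae_of_all _ ?_)
  · refine Continuous.aestronglyMeasurable ?_
    exact ((((Complex.continuous_ofReal.comp continuous_norm).pow 2).add
      continuous_const).pow 2).inv₀ (fun x => pow_ne_zero _ (sq_ne ha ‖x‖))
  · intro x
    set t : ℝ := ‖x‖ with hts
    have ht : 0 ≤ t := norm_nonneg x
    have hp : (0 : ℝ) < 1 + t ^ 2 := by positivity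
    have hq : (0 : ℝ) < 1 + t := by linarith
    have hrpow : (1 + t) ^ (-(4 : ℝ)) = ((1 + t) ^ (4 : ℕ))⁻¹ := by
      rw [Real.rpow_neg hq.le, show ((4 : ℝ)) = ((4 : ℕ) : ℝ) by norm_num,
        Real.rpow_natCast]
    have h1 : (1 + t) ^ 2 ≤ 2 * (1 + t ^ 2) := by nlinarith [sq_nonneg (1 - t)]
    have h2 : (1 + t) ^ (4 : ℕ) ≤ 4 * (1 + t ^ 2) ^ 2 := by nlinarith [sq_nonneg (1 + t), h1]
    have hnorm : ‖((((t : ℂ)) ^ 2 + a ^ 2) ^ 2)⁻¹‖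
        = ((‖(t : ℂ) ^ 2 + a ^ 2‖)⁻¹) ^ 2 := by
      simp [map_pow, map_inv₀, inv_pow]
    rw [hnorm, hrpow]
    calc ((‖(t : ℂ) ^ 2 + a ^ 2‖)⁻¹) ^ 2
        ≤ (C * (1 + t ^ 2)⁻¹) ^ 2 :=
          pow_le_pow_left₀ (inv_nonneg.mpr (norm_nonneg _)) (hb t) 2
      _ ≤ 4 * C ^ 2 * ((1 + t) ^ (4 : ℕ))⁻¹ := by
          have h3 : C ^ 2 * (1 + t) ^ (4 : ℕ) ≤ 4 * C ^ 2 * (1 + t ^ 2) ^ 2 := by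
            nlinarith [mul_le_mul_of_nonneg_left h2 (sq_nonneg C)]
          rw [mul_pow, show C ^ 2 * ((1 + t ^ 2)⁻¹) ^ 2 = C ^ 2 / (1 + t ^ 2) ^ 2 by
              rw [inv_pow, div_eq_mul_inv],
            show 4 * C ^ 2 * ((1 + t) ^ (4 : ℕ))⁻¹ = 4 * C ^ 2 / (1 + t) ^ (4 : ℕ) by
              rw [div_eq_mul_inv],
            div_le_div_iff₀ (by positivity) (by positivity)]
          linarith [h3]

end Stmt6Aux

/-- For `λ ∉ [0,∞)`: `∫_{ℝ³} 1/(‖x‖² − λ)² dx = iπ²/√λ`,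
`∫_{ℝ²} 1/(‖x‖² − λ)² dx = −π/λ`, and `∫_ℝ 1/(x² − λ)² dx = −iπ/(2(√λ)³)`;
all three Lebesgue integrals converge. -/
theorem stmt6 (lam : ℂ) (hlam : ∀ t : ℝ, 0 ≤ t → lam ≠ (t : ℂ)) :
    (Integrable (fun x : EuclideanSpace ℝ (Fin 3) => (((‖x‖ : ℂ) ^ 2 - lam) ^ 2)⁻¹) ∧
      ∫ x : EuclideanSpace ℝ (Fin 3), (((‖x‖ : ℂ) ^ 2 - lam) ^ 2)⁻¹
        = Complex.I * (Real.pi : ℂ) ^ 2 / sqrtUpper lam) ∧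
    (Integrable (fun x : EuclideanSpace ℝ (Fin 2) => (((‖x‖ : ℂ) ^ 2 - lam) ^ 2)⁻¹) ∧
      ∫ x : EuclideanSpace ℝ (Fin 2), (((‖x‖ : ℂ) ^ 2 - lam) ^ 2)⁻¹
        = -(Real.pi : ℂ) / lam) ∧
    (Integrable (fun x : ℝ => (((x : ℂ) ^ 2 - lam) ^ 2)⁻¹) ∧
      ∫ x : ℝ, (((x : ℂ) ^ 2 - lam) ^ 2)⁻¹
        = -(Complex.I * (Real.pi : ℂ)) / (2 * (sqrtUpper lam) ^ 3)) := by
  have hlam0 : lam ≠ 0 := fun h => hlam 0 le_rfl (by simp [h])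
  have hne : -lam ≠ 0 := neg_ne_zero.mpr hlam0
  set s : ℂ := (-lam) ^ ((1 : ℂ) / 2) with hs
  have harg : Complex.arg (-lam) ≠ Real.pi := by
    intro h
    rw [Complex.arg_eq_pi_iff] at h
    obtain ⟨hre, him⟩ := h
    have h1 : 0 ≤ lam.re := by
      have : (-lam).re = -lam.re := by simp
      linarith [hre.le, this ▸ hre.le]
    have h2 : lam = ((lam.re : ℝ) : ℂ) := by
      apply Complex.ext
      · simp
      · have : (-lam).im = -lam.im := by simp
        simp only [Complex.ofReal_im]
        rw [this] at him
        linarith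
    exact hlam lam.re h1 h2
  have hre : 0 < s.re := by
    rw [hs, Complex.cpow_def_of_ne_zero hne, Complex.exp_re]
    apply mul_pos (Real.exp_pos _)
    apply Real.cos_pos_of_mem_Ioo
    have h1 := Complex.neg_pi_lt_arg (-lam)
    have h2 := lt_of_le_of_ne (Complex.arg_le_pi (-lam)) harg
    have him : (Complex.log (-lam) * ((1 : ℂ) / 2)).im = Complex.arg (-lam) / 2 := by
      have : ((1 : ℂ) / 2).im = 0 ∧ ((1 : ℂ) / 2).re = 1 / 2 := by norm_num
      rw [Complex.mul_im, this.1, this.2, Complex.log_im]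
      ring
    rw [him]
    exact Set.mem_Ioo.mpr ⟨by linarith, by linarith⟩
  have hsq : s ^ 2 = -lam := by
    rw [hs, show ((1 : ℂ) / 2) = (((2 : ℕ) : ℂ))⁻¹ by norm_num]
    exact Complex.cpow_nat_inv_pow _ two_ne_zero
  have hsub : ∀ z : ℂ, z ^ 2 - lam = z ^ 2 + s ^ 2 := fun z => by rw [hsq]; ring
  have hs0 : s ≠ 0 := Stmt6Aux.a_ne hre
  have hI : sqrtUpper lam = Complex.I * s := rfl
  have hsπ : Real.sqrt Real.pi ^ 2 = Real.pi := Real.sq_sqrt Real.pi_pos.le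
  have hsπ0 : 0 < Real.sqrt Real.pi := Real.sqrt_pos.mpr Real.pi_pos
  refine ⟨⟨?_, ?_⟩, ⟨?_, ?_⟩, ⟨?_, ?_⟩⟩
  · have h := Stmt6Aux.integrable_euclidean hre (ι := Fin 3) (by simp)
    simpa only [hsub] using h
  · have hrad := MeasureTheory.integral_fun_norm_addHaar
      (volume : Measure (EuclideanSpace ℝ (Fin 3)))
      (fun t : ℝ => (((t : ℂ) ^ 2 - lam) ^ 2)⁻¹)
    have hvol : (volume (Metric.ball (0 : EuclideanSpace ℝ (Fin 3)) 1)).toReal = Real.pi * (4 / 3) := by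
      rw [EuclideanSpace.volume_ball]
      simp only [Fintype.card_fin, ENNReal.ofReal_one, one_pow, one_mul]
      have hg : Real.Gamma (((3 : ℕ) : ℝ) / 2 + 1) = 3 / 4 * Real.sqrt Real.pi := by
        rw [show (((3 : ℕ) : ℝ)) / 2 = 1 / 2 + 1 by norm_num,
          Real.Gamma_add_one (by norm_num), Real.Gamma_add_one (by norm_num),
          Real.Gamma_one_half_eq]
        ring
      rw [hg, ENNReal.toReal_ofReal (by positivity)]
      rw [pow_succ, hsπ]
      field_simp
    rw [hrad, measureReal_def, hvol]
    rw [finrank_euclideanSpace_fin]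
    have heq : ∀ y ∈ Set.Ioi (0 : ℝ), y ^ (3 - 1) • ((((y : ℂ) ^ 2 - lam)) ^ 2)⁻¹
        = (y : ℂ) ^ 2 * ((((y : ℂ) ^ 2 + s ^ 2)) ^ 2)⁻¹ := by
      intro y _
      rw [hsub, Complex.real_smul]
      norm_num
    rw [setIntegral_congr_fun measurableSet_Ioi heq, Stmt6Aux.int_sq hre, hI]
    simp only [nsmul_eq_mul, Complex.real_smul]
    push_cast
    field_simp [hs0, Complex.I_ne_zero]
  · have h := Stmt6Aux.integrable_euclidean hre (ι := Fin 2) (by simp)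
    simpa only [hsub] using h
  · have hrad := MeasureTheory.integral_fun_norm_addHaar
      (volume : Measure (EuclideanSpace ℝ (Fin 2)))
      (fun t : ℝ => (((t : ℂ) ^ 2 - lam) ^ 2)⁻¹)
    have hvol : (volume (Metric.ball (0 : EuclideanSpace ℝ (Fin 2)) 1)).toReal = Real.pi := by
      rw [EuclideanSpace.volume_ball]
      simp only [Fintype.card_fin, ENNReal.ofReal_one, one_pow, one_mul]
      have hg : Real.Gamma (((2 : ℕ) : ℝ) / 2 + 1) = 1 := by
        rw [show (((2 : ℕ) : ℝ)) / 2 + 1 = 1 + 1 by norm_num,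
          Real.Gamma_add_one (by norm_num), Real.Gamma_one]
        ring
      rw [hg, ENNReal.toReal_ofReal (by positivity)]
      rw [hsπ]
      ring
    rw [hrad, measureReal_def, hvol]
    rw [finrank_euclideanSpace_fin]
    have heq : ∀ y ∈ Set.Ioi (0 : ℝ), y ^ (2 - 1) • ((((y : ℂ) ^ 2 - lam)) ^ 2)⁻¹
        = (y : ℂ) * ((((y : ℂ) ^ 2 + s ^ 2)) ^ 2)⁻¹ := by
      intro y _
      rw [hsub, Complex.real_smul]
      norm_num
    rw [setIntegral_congr_fun measurableSet_Ioi heq, Stmt6Aux.int_lin hre]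
    simp only [nsmul_eq_mul, Complex.real_smul]
    rw [hsq]
    push_cast
    field_simp [hlam0]
  · have h := Stmt6Aux.integrable_inv_sq hre
    simpa only [hsub] using h
  · simp only [hsub]
    rw [Stmt6Aux.int_real hre, hI]
    have hI3 : Complex.I ^ 3 = -Complex.I := by
      rw [pow_succ, Complex.I_sq]
      ring
    have hIs : (Complex.I * s) ^ 3 = -Complex.I * s ^ 3 := by
      rw [mul_pow, hI3]
    rw [hIs]
    field_simp [hs0, Complex.I_ne_zero]
end

section
/- Let a ∈ ℝ³ and let Q̇ be the densely defined unbounded operator on L²(ℝ³) with domain { f ∈ L²(ℝ³) : (x ↦ ‖x‖² f(x)) ∈ L²(ℝ³) and ∫_{ℝ³} e^{−i⟨a,x⟩} f(x) dx = 0 } (every f with f, ‖x‖²f ∈ L²(ℝ³) is integrable, so the constraint makes sense), acting by (Q̇ f)(x) = ‖x‖² f(x). Then for u ∈ L²(ℝ³) and either sign ±: u belongs to the domain of the adjoint Q̇* and satisfies Q̇* u = ± i u if and only if u is almost everywhere equal to a scalar multiple of ψ_±(x) = e^{i⟨a,x⟩}/(‖x‖² ∓ i). In particular both deficiency spaces ker(Q̇*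 ∓ i) are one-dimensional. -/
open MeasureTheory

open Complex

noncomputable section

private abbrev E3 := EuclideanSpace ℝ (Fin 3)

lemma aux_integrable_conj_mul {f g : E3 → ℂ} (hf : MemLp f 2 volume) (hg : MemLp g 2 volume) :
    Integrable (fun x => (starRingEnd ℂ) (f x) * g x) volume := by
  have h := L2.integrable_inner (𝕜 := ℂ) (hf.toLp f) (hg.toLp g)
  refine h.congr ?_
  filter_upwards [hf.coeFn_toLp, hg.coeFn_toLp] with x h1 h2
  simp [h1, h2, RCLike.inner_apply, mul_comm]

lemma aux_integrable_mul_real {f g : E3 → ℝ} (hf : MemLp f 2 volume) (hg : MemLp g 2 volume) :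
    Integrable (fun x => f x * g x) volume := by
  have h := L2.integrable_inner (𝕜 := ℝ) (hf.toLp f) (hg.toLp g)
  refine h.congr ?_
  filter_upwards [hf.coeFn_toLp, hg.coeFn_toLp] with x h1 h2
  simp [h1, h2, RCLike.inner_apply, mul_comm]

lemma aux_gauss_int {b : ℝ} (hb : 0 < b) :
    Integrable (fun x : E3 => Real.exp (-b * ‖x‖ ^ 2)) volume := by
  have h := (GaussianFourier.integrable_cexp_neg_mul_sq_norm_add (V := E3)
      (b := (b:ℂ)) (by simpa using hb) 0 0).norm
  refine h.congr ?_
  filter_upwards with x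
  simp [Complex.norm_exp, pow_two, Complex.mul_re]

lemma aux_den_ne (σ : ℝ) (hσ : σ = 1 ∨ σ = -1) (x : E3) :
    ((‖x‖:ℂ)^2 - (σ:ℂ) * Complex.I) ≠ 0 := by
  intro h
  have h2 := congrArg Complex.im h
  rw [Complex.sub_im] at h2; norm_num at h2
  rcases hσ with h | h <;> rw [h] at h2 <;> simp [pow_two, Complex.mul_im] at h2

lemma aux_int_conj {h : E3 → ℂ} (hi : Integrable h volume) :
    Integrable (fun x => (starRingEnd ℂ) (h x)) volume := by
  refine hi.norm.mono' (Complex.continuous_conj.comp_aestronglyMeasurable hi.aestronglyMeasurable) ?_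
  filter_upwards with x
  simp

lemma aux_sq_exp (s : ℝ) (hs : 0 ≤ s) : s^2 * Real.exp (-(2*s)) ≤ 4 * Real.exp (-s) := by
  have h1 : s ≤ 2 * Real.exp (s/2) := by
    have := Real.add_one_le_exp (s/2)
    nlinarith [Real.exp_pos (s/2)]
  have h2 : s * Real.exp (-s) ≤ 2 * Real.exp (-(s/2)) := by
    have hp := Real.exp_pos (-s)
    have : s * Real.exp (-s) ≤ (2 * Real.exp (s/2)) * Real.exp (-s) := by nlinarith
    refine this.trans (le_of_eq ?_)
    rw [mul_assoc, ← Real.exp_add]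
    ring_nf
  have e2 : Real.exp (-(2*s)) = Real.exp (-s) ^ 2 := by
    rw [pow_two, ← Real.exp_add]; ring_nf
  have e4 : 4 * Real.exp (-s) = (2 * Real.exp (-(s/2)))^2 := by
    rw [mul_pow, sq (Real.exp _), ← Real.exp_add]
    ring_nf
  rw [e2, e4]
  calc s^2 * Real.exp (-s)^2 = (s * Real.exp (-s))^2 := by ring
  _ ≤ (2 * Real.exp (-(s/2)))^2 := by
      apply pow_le_pow_left₀ (by positivity) h2

lemma inner_cont (a : E3) : Continuous fun x : E3 => (inner ℝ a x : ℝ) :=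
  continuous_const.inner continuous_id

lemma epos_cont (a : E3) : Continuous fun x : E3 => Complex.exp (Complex.I * ((inner ℝ a x : ℝ) : ℂ)) :=
  Complex.continuous_exp.comp <| continuous_const.mul <|
    Complex.continuous_ofReal.comp (inner_cont a)

private def phi (a : E3) : E3 → ℂ :=
  fun x => Complex.exp (Complex.I * ((inner ℝ a x : ℝ) : ℂ)) * ((Real.exp (-‖x‖^2) : ℝ) : ℂ)

lemma phi_cont (a : E3) : Continuous (phi a) :=
  (epos_cont a).mul <| Complex.continuous_ofReal.comp <|
    Real.continuous_exp.comp (continuous_norm.pow 2).neg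

lemma norm_epos (a : E3) (x : E3) : ‖Complex.exp (Complex.I * ((inner ℝ a x : ℝ) : ℂ))‖ = 1 := by
  rw [Complex.norm_exp]
  simp [Complex.mul_re]

lemma norm_phi (a : E3) (x : E3) : ‖phi a x‖ = Real.exp (-‖x‖^2) := by
  rw [phi, norm_mul, norm_epos, one_mul, Complex.norm_real, Real.norm_eq_abs,
    abs_of_pos (Real.exp_pos _)]

lemma eneg_cont (a : E3) :
    Continuous fun x : E3 => Complex.exp (-(Complex.I * ((inner ℝ a x : ℝ) : ℂ))) :=
  Complex.continuous_exp.comp <| (continuous_const.mul <|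
    Complex.continuous_ofReal.comp (inner_cont a)).neg

lemma norm_eneg (a : E3) (x : E3) :
    ‖Complex.exp (-(Complex.I * ((inner ℝ a x : ℝ) : ℂ)))‖ = 1 := by
  rw [Complex.norm_exp]
  simp [Complex.mul_re]

lemma phi_mem (a : E3) : MemLp (phi a) 2 volume := by
  rw [memLp_two_iff_integrable_sq_norm (phi_cont a).aestronglyMeasurable]
  refine (aux_gauss_int two_pos).congr ?_
  filter_upwards with x
  rw [norm_phi, sq (Real.exp _), ← Real.exp_add]
  ring_nf

lemma phi_mem2 (a : E3) : MemLp (fun x => ((‖x‖:ℂ)^2) * phi a x) 2 volume := by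
  have hc : Continuous fun x : E3 => ((‖x‖:ℂ)^2) * phi a x :=
    ((Complex.continuous_ofReal.comp continuous_norm).pow 2).mul (phi_cont a)
  rw [memLp_two_iff_integrable_sq_norm hc.aestronglyMeasurable]
  refine ((aux_gauss_int one_pos).const_mul 4).mono' ?_ ?_
  · exact (hc.norm.pow 2).aestronglyMeasurable
  filter_upwards with x
  have h := aux_sq_exp (‖x‖^2) (by positivity)
  have hn : ‖((‖x‖:ℂ)^2)‖ = ‖x‖^2 := by
    rw [← Complex.ofReal_pow, Complex.norm_real, Real.norm_eq_abs, _root_.abs_of_nonneg (by positivity)]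
  rw [Real.norm_eq_abs, _root_.abs_of_nonneg (by positivity), norm_mul, hn, norm_phi]
  calc (‖x‖^2 * Real.exp (-‖x‖^2))^2 = (‖x‖^2)^2 * Real.exp (-(2*‖x‖^2)) := by
        rw [mul_pow, sq (Real.exp _), ← Real.exp_add]; ring_nf
  _ ≤ 4 * Real.exp (-‖x‖^2) := h
  _ ≤ 4 * Real.exp (-1 * ‖x‖^2) := by norm_num

lemma eneg_mul_phi (a : E3) (x : E3) :
    Complex.exp (-(Complex.I * ((inner ℝ a x : ℝ) : ℂ))) * phi a x
      = ((Real.exp (-‖x‖^2) : ℝ) : ℂ) := by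
  rw [phi, ← mul_assoc, ← Complex.exp_add]
  simp

lemma phi_int (a : E3) :
    Integrable (fun x => Complex.exp (-(Complex.I * ((inner ℝ a x : ℝ) : ℂ))) * phi a x) volume := by
  refine ((aux_gauss_int one_pos).ofReal (𝕜 := ℂ)).congr ?_
  filter_upwards with x
  rw [eneg_mul_phi]
  norm_num

lemma c0_pos : 0 < ∫ x : E3, Real.exp (-‖x‖^2) := by
  have : (∫ x : E3, Real.exp (-‖x‖^2)) = ∫ x : E3, Real.exp (-1 * ‖x‖^2) := by norm_num
  rw [this, GaussianFourier.integral_rexp_neg_mul_sq_norm one_pos]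
  positivity

lemma int_eneg_phi (a : E3) :
    (∫ x, Complex.exp (-(Complex.I * ((inner ℝ a x : ℝ) : ℂ))) * phi a x)
      = ((∫ x : E3, Real.exp (-‖x‖^2) : ℝ) : ℂ) := by
  calc (∫ x, Complex.exp (-(Complex.I * ((inner ℝ a x : ℝ) : ℂ))) * phi a x)
      = ∫ x : E3, ((Real.exp (-‖x‖^2) : ℝ) : ℂ) :=
        integral_congr_ae (Filter.Eventually.of_forall fun x => eneg_mul_phi a x)
  _ = _ := integral_ofReal

lemma aux_conj_eneg (t : ℝ) :
    (starRingEnd ℂ) (Complex.exp (-(Complex.I * (t:ℂ)))) = Complex.exp (Complex.I * (t:ℂ)) := by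
  rw [← Complex.exp_conj]
  congr 1
  simp [map_neg, map_mul, Complex.conj_I, Complex.conj_ofReal]

lemma aux_int_conj_v (σ : ℝ) {u g : E3 → ℂ} (hu : MemLp u 2 volume) (hg1 : MemLp g 2 volume)
    (hg2 : MemLp (fun x => ((‖x‖:ℂ)^2) * g x) 2 volume) :
    Integrable (fun x => (starRingEnd ℂ) (g x) * ((((‖x‖:ℂ)^2 - (σ:ℂ)*Complex.I)) * u x))
      volume := by
  have heq : (fun x => (starRingEnd ℂ) (g x) * ((((‖x‖:ℂ)^2 - (σ:ℂ)*Complex.I)) * u x))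
      = fun x => (starRingEnd ℂ) (((‖x‖:ℂ)^2) * g x) * u x
          - (starRingEnd ℂ) (g x) * ((σ:ℂ) * Complex.I * u x) := by
    funext x
    simp only [map_mul, map_pow, Complex.conj_ofReal]
    ring
  rw [heq]
  exact (aux_integrable_conj_mul hg2 hu).sub (aux_integrable_conj_mul hg1 (hu.const_mul _))

lemma key_vanish (a : E3) (σ : ℝ) (u : E3 → ℂ) (hu : MemLp u 2 volume)
    (H : ∀ f : E3 → ℂ, MemLp f 2 volume →
        MemLp (fun x => ((‖x‖ : ℂ) ^ 2) * f x) 2 volume →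
        Integrable (fun x => Complex.exp (-(Complex.I * ((inner ℝ a x : ℝ) : ℂ))) * f x) →
        (∫ x, Complex.exp (-(Complex.I * ((inner ℝ a x : ℝ) : ℂ))) * f x) = 0 →
        (∫ x, (starRingEnd ℂ) (((‖x‖ : ℂ) ^ 2) * f x) * u x)
          = ∫ x, (starRingEnd ℂ) (f x) * ((σ : ℂ) * Complex.I * u x)) :
    ∃ K : ℂ, ∀ g : E3 → ℂ, MemLp g 2 volume →
      MemLp (fun x => ((‖x‖ : ℂ) ^ 2) * g x) 2 volume →
      Integrable (fun x => Complex.exp (-(Complex.I * ((inner ℝ a x : ℝ) : ℂ))) * g x) →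
      (∫ x, (starRingEnd ℂ) (g x) * ((((‖x‖:ℂ)^2 - (σ:ℂ)*Complex.I)) * u x))
        = (starRingEnd ℂ) (∫ x, Complex.exp (-(Complex.I * ((inner ℝ a x : ℝ) : ℂ))) * g x) * K := by
  have hc0pos := c0_pos
  set c0 : ℝ := ∫ x : E3, Real.exp (-‖x‖^2) with hc0
  have hc0ne : (c0 : ℂ) ≠ 0 := Complex.ofReal_ne_zero.2 hc0pos.ne'
  have step1 : ∀ f : E3 → ℂ, MemLp f 2 volume →
      MemLp (fun x => ((‖x‖:ℂ)^2) * f x) 2 volume →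
      Integrable (fun x => Complex.exp (-(Complex.I * ((inner ℝ a x : ℝ):ℂ))) * f x) →
      (∫ x, Complex.exp (-(Complex.I * ((inner ℝ a x : ℝ):ℂ))) * f x) = 0 →
      (∫ x, (starRingEnd ℂ) (f x) * ((((‖x‖:ℂ)^2 - (σ:ℂ)*Complex.I)) * u x)) = 0 := by
    intro f hf1 hf2 hfi hf0
    have hH := H f hf1 hf2 hfi hf0
    have hint1 : Integrable (fun x => (starRingEnd ℂ) (((‖x‖:ℂ)^2) * f x) * u x) volume :=
      aux_integrable_conj_mul hf2 hu
    have hint2 : Integrable (fun x => (starRingEnd ℂ) (f x) * ((σ:ℂ) * Complex.I * u x))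
        volume := aux_integrable_conj_mul hf1 (hu.const_mul _)
    have heq : (fun x => (starRingEnd ℂ) (f x) * ((((‖x‖:ℂ)^2 - (σ:ℂ)*Complex.I)) * u x))
        = fun x => (starRingEnd ℂ) (((‖x‖:ℂ)^2) * f x) * u x
            - (starRingEnd ℂ) (f x) * ((σ:ℂ) * Complex.I * u x) := by
      funext x
      simp only [map_mul, map_pow, Complex.conj_ofReal]
      ring
    rw [heq, integral_sub hint1 hint2, hH, sub_self]
  refine ⟨(∫ x, (starRingEnd ℂ) (phi a x)
      * ((((‖x‖:ℂ)^2 - (σ:ℂ)*Complex.I)) * u x)) / (c0 : ℂ), ?_⟩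
  intro g hg1 hg2 hgi
  set lam : ℂ := (∫ x, Complex.exp (-(Complex.I * ((inner ℝ a x : ℝ):ℂ))) * g x) / (c0:ℂ) with hlam
  set f : E3 → ℂ := fun x => g x - lam * phi a x with hf
  have hf1 : MemLp f 2 volume := hg1.sub ((phi_mem a).const_mul lam)
  have hf2 : MemLp (fun x => ((‖x‖:ℂ)^2) * f x) 2 volume := by
    have heq : (fun x => ((‖x‖:ℂ)^2) * f x)
        = fun x => ((‖x‖:ℂ)^2) * g x - lam * (((‖x‖:ℂ)^2) * phi a x) := by
      funext x; simp only [hf]; ring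
    rw [heq]
    exact hg2.sub ((phi_mem2 a).const_mul lam)
  have heqe : (fun x => Complex.exp (-(Complex.I * ((inner ℝ a x : ℝ):ℂ))) * f x)
      = fun x => Complex.exp (-(Complex.I * ((inner ℝ a x : ℝ):ℂ))) * g x
          - lam * (Complex.exp (-(Complex.I * ((inner ℝ a x : ℝ):ℂ))) * phi a x) := by
    funext x; simp only [hf]; ring
  have hfi : Integrable (fun x => Complex.exp (-(Complex.I * ((inner ℝ a x : ℝ):ℂ))) * f x) := by
    rw [heqe]
    exact hgi.sub ((phi_int a).const_mul lam)
  have hf0 : (∫ x, Complex.exp (-(Complex.I * ((inner ℝ a x : ℝ):ℂ))) * f x) = 0 := by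
    rw [heqe, integral_sub hgi ((phi_int a).const_mul lam), integral_const_mul,
      int_eneg_phi a, hlam]
    rw [← hc0]
    field_simp
    ring
  have h0 := step1 f hf1 hf2 hfi hf0
  have hexp : (fun x => (starRingEnd ℂ) (f x) * ((((‖x‖:ℂ)^2 - (σ:ℂ)*Complex.I)) * u x))
      = fun x => (starRingEnd ℂ) (g x) * ((((‖x‖:ℂ)^2 - (σ:ℂ)*Complex.I)) * u x)
          - (starRingEnd ℂ) lam
            * ((starRingEnd ℂ) (phi a x) * ((((‖x‖:ℂ)^2 - (σ:ℂ)*Complex.I)) * u x)) := by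
    funext x
    simp only [hf, map_sub, map_mul]
    ring
  rw [hexp, integral_sub (aux_int_conj_v σ hu hg1 hg2)
    ((aux_int_conj_v σ hu (phi_mem a) (phi_mem2 a)).const_mul _), integral_const_mul,
    sub_eq_zero] at h0
  rw [h0, hlam, map_div₀]
  rw [show (starRingEnd ℂ) ((c0:ℝ):ℂ) = ((c0:ℝ):ℂ) from Complex.conj_ofReal _]
  ring

/-- Let `Q̇` be the multiplication operator `f ↦ ‖x‖² f` on `L²(ℝ³)` with domain
`{f ∈ L² : ‖x‖² f ∈ L², ∫ e^{−i⟨a,x⟩} f = 0}`.  For `u ∈ L²(ℝ³)` and either sign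
`σ = ±1`:  `u` belongs to the domain of the adjoint `Q̇*` with `Q̇* u = σ i u`
(expressed via the defining property of the adjoint: `⟪Q̇ f, u⟫ = ⟪f, σ i u⟫` for
all `f` in the domain of `Q̇`) if and only if `u` is a.e. a scalar multiple of
`ψ_σ(x) = e^{i⟨a,x⟩}/(‖x‖² − σ i)`.  In particular both deficiency spaces of `Q̇`
are one-dimensional. -/
theorem stmt11 (a : EuclideanSpace ℝ (Fin 3)) (σ : ℝ) (hσ : σ = 1 ∨ σ = -1)
    (u : EuclideanSpace ℝ (Fin 3) → ℂ) (hu : MemLp u 2 volume) :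
    (∀ f : EuclideanSpace ℝ (Fin 3) → ℂ,
        MemLp f 2 volume →
        MemLp (fun x => ((‖x‖ : ℂ) ^ 2) * f x) 2 volume →
        Integrable (fun x => Complex.exp (-(Complex.I * ((inner ℝ a x : ℝ) : ℂ))) * f x) →
        (∫ x, Complex.exp (-(Complex.I * ((inner ℝ a x : ℝ) : ℂ))) * f x) = 0 →
        (∫ x, (starRingEnd ℂ) (((‖x‖ : ℂ) ^ 2) * f x) * u x)
          = ∫ x, (starRingEnd ℂ) (f x) * ((σ : ℂ) * Complex.I * u x))
    ↔ ∃ c : ℂ, u =ᵐ[volume] fun x =>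
        c * (Complex.exp (Complex.I * ((inner ℝ a x : ℝ) : ℂ)) /
          ((‖x‖ : ℂ) ^ 2 - (σ : ℂ) * Complex.I)) := by
  have habs : |σ| = 1 := by rcases hσ with h | h <;> rw [h] <;> norm_num
  constructor
  · intro H
    obtain ⟨K, hK⟩ := key_vanish a σ u hu H
    refine ⟨K, ?_⟩
    set w : E3 → ℂ := fun x => ((‖x‖:ℂ)^2 - (σ:ℂ)*Complex.I) * u x
        - K * Complex.exp (Complex.I * ((inner ℝ a x : ℝ):ℂ)) with hw
    have hwm : AEStronglyMeasurable w volume := by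
      apply AEStronglyMeasurable.sub
      · exact (((Complex.continuous_ofReal.comp continuous_norm).pow 2).sub
          continuous_const).aestronglyMeasurable.mul hu.aestronglyMeasurable
      · exact (continuous_const.mul (epos_cont a)).aestronglyMeasurable
    have hball : ∀ n : ℕ, (Metric.ball (0:E3) ((n:ℝ)+1)).indicator
        (fun x => Complex.normSq (w x)) =ᵐ[volume] 0 := by
      intro n
      set B := Metric.ball (0:E3) ((n:ℝ)+1) with hB
      have hBmeas : MeasurableSet B := measurableSet_ball
      have hBvol : volume B ≠ ⊤ := measure_ball_lt_top.ne
      set g : E3 → ℂ := B.indicator w with hg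
      have hgm : AEStronglyMeasurable g volume := hwm.indicator hBmeas
      set C : ℝ := ((n:ℝ)+1)^2 + 1 with hC
      have hbound : ∀ x ∈ B, ‖w x‖ ≤ C * ‖u x‖ + ‖K‖ := by
        intro x hx
        have hx' : ‖x‖ < (n:ℝ)+1 := by
          have hx2 := hx
          rw [hB, Metric.mem_ball, dist_zero_right] at hx2
          exact hx2
        have h1 : ‖((‖x‖:ℂ)^2 - (σ:ℂ)*Complex.I)‖ ≤ C := by
          refine (norm_sub_le _ _).trans ?_
          rw [norm_mul, Complex.norm_I, mul_one, Complex.norm_real, Real.norm_eq_abs, habs,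
            ← Complex.ofReal_pow, Complex.norm_real, Real.norm_eq_abs,
            _root_.abs_of_nonneg (by positivity), hC]
          have : ‖x‖^2 ≤ ((n:ℝ)+1)^2 := by
            apply pow_le_pow_left₀ (norm_nonneg x) hx'.le
          linarith
        calc ‖w x‖ ≤ ‖((‖x‖:ℂ)^2 - (σ:ℂ)*Complex.I) * u x‖
            + ‖K * Complex.exp (Complex.I * ((inner ℝ a x : ℝ):ℂ))‖ := norm_sub_le _ _
        _ ≤ C * ‖u x‖ + ‖K‖ := by
            rw [norm_mul, norm_mul, norm_epos, mul_one]
            gcongr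
      set M : E3 → ℝ := fun x => C * ‖u x‖ + B.indicator (fun _ => ‖K‖) x with hM
      have hMmem : MemLp M 2 volume :=
        (hu.norm.const_mul C).add (memLp_indicator_const 2 hBmeas _ (Or.inr hBvol))
      have hMnn : ∀ x, 0 ≤ M x := by
        intro x
        have : 0 ≤ B.indicator (fun _ => ‖K‖) x :=
          Set.indicator_apply_nonneg fun _ => norm_nonneg _
        have hC0 : 0 ≤ C := by positivity
        positivity
      have hgM : ∀ x, ‖g x‖ ≤ M x := by
        intro x
        by_cases hx : x ∈ B
        · rw [hg, hM]
          simp only [Set.indicator_of_mem hx]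
          exact hbound x hx
        · rw [hg, hM]
          simp only [Set.indicator_of_notMem hx]
          simp only [norm_zero, add_zero]
          positivity
      have hg2 : MemLp g 2 volume :=
        hMmem.of_le hgm (Filter.Eventually.of_forall fun x =>
          (hgM x).trans (le_abs_self _))
      have hg2' : MemLp (fun x => ((‖x‖:ℂ)^2) * g x) 2 volume := by
        refine (hMmem.const_mul (((n:ℝ)+1)^2)).of_le
          (((Complex.continuous_ofReal.comp continuous_norm).pow 2).aestronglyMeasurable.mul hgm)
          (Filter.Eventually.of_forall fun x => ?_)
        rw [norm_mul]
        have hnx : ‖((‖x‖:ℂ)^2)‖ = ‖x‖^2 := by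
          rw [← Complex.ofReal_pow, Complex.norm_real, Real.norm_eq_abs,
            _root_.abs_of_nonneg (by positivity)]
        rw [hnx, Real.norm_eq_abs]
        by_cases hx : x ∈ B
        · have hx' : ‖x‖ < (n:ℝ)+1 := by
            have hx2 := hx
            rw [hB, Metric.mem_ball, dist_zero_right] at hx2
            exact hx2
          have h1 : ‖x‖^2 ≤ ((n:ℝ)+1)^2 := pow_le_pow_left₀ (norm_nonneg x) hx'.le 2
          have h2 := hgM x
          have h3 := hMnn x
          calc ‖x‖^2 * ‖g x‖ ≤ ((n:ℝ)+1)^2 * M x := by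
                apply mul_le_mul h1 h2 (norm_nonneg _) (by positivity)
          _ ≤ |((n:ℝ)+1)^2 * M x| := le_abs_self _
        · rw [hg]
          simp only [Set.indicator_of_notMem hx, norm_zero, mul_zero]
          positivity
      have hgi : Integrable
          (fun x => Complex.exp (-(Complex.I * ((inner ℝ a x : ℝ):ℂ))) * g x) volume := by
        have hint1 : Integrable (fun x => B.indicator (fun _ => (1:ℝ)) x * (C * ‖u x‖))
            volume := aux_integrable_mul_real
          (memLp_indicator_const 2 hBmeas 1 (Or.inr hBvol)) (hu.norm.const_mul C)
        have hint2 : Integrable (B.indicator (fun _ => ‖K‖)) volume :=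
          (integrable_indicator_iff hBmeas).2 (integrableOn_const hBvol)
        have hmeas : AEStronglyMeasurable
            (fun x => Complex.exp (-(Complex.I * ((inner ℝ a x : ℝ):ℂ))) * g x) volume :=
          (eneg_cont a).aestronglyMeasurable.mul hgm
        refine Integrable.mono' (hint1.add hint2) hmeas (Filter.Eventually.of_forall fun x => ?_)
        simp only [Pi.add_apply]
        rw [norm_mul, norm_eneg, one_mul]
        by_cases hx : x ∈ B
        · have hgx : g x = w x := by rw [hg]; exact Set.indicator_of_mem hx w
          rw [hgx]
          simp only [Set.indicator_of_mem hx, one_mul]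
          exact hbound x hx
        · have hgx : g x = (0:ℂ) := by rw [hg]; exact Set.indicator_of_notMem hx w
          rw [hgx]
          simp only [Set.indicator_of_notMem hx, norm_zero, zero_mul, zero_add]
          exact le_rfl
      have hKg := hK g hg2 hg2' hgi
      have hconj1 : ∀ x : E3, (starRingEnd ℂ)
          (Complex.exp (-(Complex.I * ((inner ℝ a x : ℝ):ℂ))) * g x)
          = (starRingEnd ℂ) (g x) * Complex.exp (Complex.I * ((inner ℝ a x : ℝ):ℂ)) := by
        intro x
        rw [map_mul, aux_conj_eneg, mul_comm]
      have hconj : (starRingEnd ℂ)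
          (∫ x, Complex.exp (-(Complex.I * ((inner ℝ a x : ℝ):ℂ))) * g x)
          = ∫ x, (starRingEnd ℂ) (g x) * Complex.exp (Complex.I * ((inner ℝ a x : ℝ):ℂ)) := by
        rw [← integral_conj]
        exact integral_congr_ae (Filter.Eventually.of_forall hconj1)
      have hgiconj : Integrable
          (fun x => (starRingEnd ℂ) (g x) * Complex.exp (Complex.I * ((inner ℝ a x : ℝ):ℂ)))
          volume := (aux_int_conj hgi).congr (Filter.Eventually.of_forall hconj1)
      have hzero : (∫ x, (starRingEnd ℂ) (g x) * w x) = 0 := by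
        have hsplit : (fun x => (starRingEnd ℂ) (g x) * w x)
            = fun x => (starRingEnd ℂ) (g x) * ((((‖x‖:ℂ)^2 - (σ:ℂ)*Complex.I)) * u x)
                - K * ((starRingEnd ℂ) (g x)
                  * Complex.exp (Complex.I * ((inner ℝ a x : ℝ):ℂ))) := by
          funext x
          simp only [hw]
          ring
        rw [hsplit, integral_sub (aux_int_conj_v σ hu hg2 hg2') (hgiconj.const_mul K),
          integral_const_mul, hKg, hconj]
        ring
      have hptw : ∀ x, (starRingEnd ℂ) (g x) * w x
          = ((B.indicator (fun y => Complex.normSq (w y)) x : ℝ) : ℂ) := by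
        intro x
        by_cases hx : x ∈ B
        · rw [hg, Set.indicator_of_mem hx, Set.indicator_of_mem hx, mul_comm,
            Complex.mul_conj]
        · rw [hg]
          simp [Set.indicator_of_notMem hx]
      rw [integral_congr_ae (Filter.Eventually.of_forall hptw)] at hzero
      have hcast : (∫ x, ((B.indicator (fun y => Complex.normSq (w y)) x : ℝ) : ℂ))
          = ((∫ x, B.indicator (fun y => Complex.normSq (w y)) x : ℝ) : ℂ) := integral_ofReal
      rw [hcast] at hzero
      have hreal : (∫ x, B.indicator (fun y => Complex.normSq (w y)) x) = 0 := by
        exact_mod_cast hzero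
      have hnonneg : (0 : E3 → ℝ) ≤ fun x => B.indicator (fun y => Complex.normSq (w y)) x :=
        fun x => Set.indicator_apply_nonneg fun _ => Complex.normSq_nonneg _
      have hinteg : Integrable (fun x => B.indicator (fun y => Complex.normSq (w y)) x)
          volume := by
        have h2 := (memLp_two_iff_integrable_sq_norm hgm).1 hg2
        refine h2.congr (Filter.Eventually.of_forall fun x => ?_)
        by_cases hx : x ∈ B
        · simp only [hg, Set.indicator_of_mem hx, Complex.sq_norm]
        · simp only [hg, Set.indicator_of_notMem hx, norm_zero]
          norm_num
      exact (integral_eq_zero_iff_of_nonneg hnonneg hinteg).1 hreal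
    have hae : ∀ᵐ x ∂(volume : Measure E3), ∀ n : ℕ,
        (Metric.ball (0:E3) ((n:ℝ)+1)).indicator (fun y => Complex.normSq (w y)) x = 0 :=
      ae_all_iff.2 fun n => by filter_upwards [hball n] with x h; simpa using h
    filter_upwards [hae] with x hx
    obtain ⟨n, hn⟩ := exists_nat_gt ‖x‖
    have hxB : x ∈ Metric.ball (0:E3) ((n:ℝ)+1) := by
      rw [Metric.mem_ball, dist_zero_right]; linarith
    have h1 := hx n
    rw [Set.indicator_of_mem hxB] at h1
    have hw0 : w x = 0 := Complex.normSq_eq_zero.1 h1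
    simp only [hw] at hw0
    have heq2 : ((‖x‖:ℂ)^2 - (σ:ℂ)*Complex.I) * u x
        = K * Complex.exp (Complex.I * ((inner ℝ a x : ℝ):ℂ)) := sub_eq_zero.1 hw0
    have hden := aux_den_ne σ hσ x
    rw [← mul_div_assoc, eq_div_iff hden]
    linear_combination heq2
  · rintro ⟨c, hc⟩ f hf1 hf2 hfi hf0
    have hint1 := aux_integrable_conj_mul hf2 hu
    have hint2 := aux_integrable_conj_mul hf1 (hu.const_mul ((σ:ℂ)*Complex.I))
    rw [← sub_eq_zero, ← integral_sub hint1 hint2]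
    have hptw : (fun x => (starRingEnd ℂ) (((‖x‖:ℂ)^2) * f x) * u x
        - (starRingEnd ℂ) (f x) * ((σ:ℂ)*Complex.I*u x))
        =ᵐ[volume] fun x => c * (starRingEnd ℂ)
          (Complex.exp (-(Complex.I * ((inner ℝ a x : ℝ):ℂ))) * f x) := by
      filter_upwards [hc] with x hx
      have hden := aux_den_ne σ hσ x
      have hden' : (‖x‖:ℂ)^2 - Complex.I * (σ:ℂ) ≠ 0 := by rw [mul_comm]; exact hden
      simp only [map_mul, map_pow, Complex.conj_ofReal, aux_conj_eneg, hx]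
      field_simp
    rw [integral_congr_ae hptw, integral_const_mul, integral_conj, hf0, map_zero, mul_zero]
end
end

section
/- Let a > 0 and b > 0 be real. Then for every real λ, b − i·s(λ) + e^{2ia·s(λ)}/(2a) ≠ 0, where s(λ) = √λ (the nonnegative real root) if λ ≥ 0 and s(λ) = i√(−λ) if λ < 0. Equivalently, the perturbed Laplacian on the half space ℍ³ with delta interaction of coupling g_R > 0 at distance a from the boundary (for which b = 2/(π² g_R)) has no real eigenvalue: the eigenvalue equation 1/g_R − (π²/2) i √λ + (π²/(4a)) e^{2ia√λ} = 0 has no real solution λ. -/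
/-- For real `a > 0`, `b > 0` and any real `λ`, with `s(λ) = √λ` for `λ ≥ 0` and
`s(λ) = i√(−λ)` for `λ < 0`, one has `b − i·s(λ) + e^{2ia·s(λ)}/(2a) ≠ 0`.
(Equivalently, the delta-perturbed Laplacian on the half space `ℍ³` with coupling
`g_R > 0`, `b = 2/(π² g_R)`, has no real eigenvalue.) -/
theorem stmt12 (a b : ℝ) (ha : 0 < a) (hb : 0 < b) (lam : ℝ) (s : ℂ)
    (hs : s = if 0 ≤ lam then ((Real.sqrt lam : ℝ) : ℂ)
      else Complex.I * ((Real.sqrt (-lam) : ℝ) : ℂ)) :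
    (b : ℂ) - Complex.I * s + Complex.exp (2 * Complex.I * (a : ℂ) * s) / (2 * (a : ℂ)) ≠ 0 := by
  by_cases hl : 0 ≤ lam
  · rw [if_pos hl] at hs
    set t := Real.sqrt lam with htdef
    have ht : 0 ≤ t := Real.sqrt_nonneg _
    intro h
    rw [hs] at h
    have harg : 2 * Complex.I * (a : ℂ) * (t : ℂ) = ((2*a*t : ℝ) : ℂ) * Complex.I := by
      push_cast; ring
    rw [harg, Complex.exp_mul_I] at h
    have him := congrArg Complex.im h
    have hre := congrArg Complex.re h
    simp [Complex.div_im, Complex.div_re, Complex.cos_ofReal_re, Complex.sin_ofReal_re,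
      Complex.cos_ofReal_im, Complex.sin_ofReal_im,
      Complex.normSq, ne_of_gt ha, -Complex.ofReal_mul] at him hre
    have ha2 : (0:ℝ) < 2*a := by linarith
    have hsin : Real.sin (2*a*t) = 2*a*t := by
      field_simp at him
      have e : t * 2 * a = 2 * a * t := by ring
      rw [e] at him
      nlinarith [him]
    have ht0 : t = 0 := by
      by_contra h0
      have hpos : 0 < 2*a*t := by positivity
      have := Real.sin_lt hpos
      linarith
    rw [ht0] at hre
    norm_num at hre
    have hainv : 0 < a⁻¹ := inv_pos.mpr ha
    nlinarith
  · rw [if_neg hl] at hs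
    push_neg at hl
    set u := Real.sqrt (-lam) with hu
    have hu0 : 0 < u := Real.sqrt_pos.mpr (by linarith)
    rw [hs]
    have h1 : (b:ℂ) - Complex.I * (Complex.I * (u:ℂ)) + Complex.exp (2 * Complex.I * (a:ℂ) * (Complex.I * (u:ℂ))) / (2*(a:ℂ))
        = ((b + u + Real.exp (-(2*a*u)) / (2*a) : ℝ) : ℂ) := by
      have : 2 * Complex.I * (a:ℂ) * (Complex.I * (u:ℂ)) = ((-(2*a*u) : ℝ) : ℂ) := by
        push_cast
        rw [show (2:ℂ) * Complex.I * a * (Complex.I * u) = (Complex.I*Complex.I) * (2*a*u) by ring,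
          Complex.I_mul_I]
        ring
      rw [this, ← Complex.ofReal_exp]
      push_cast
      rw [show Complex.I * (Complex.I * (u:ℂ)) = (Complex.I*Complex.I) * u by ring, Complex.I_mul_I]
      ring
    rw [h1]
    norm_cast
    positivity
end

section
/- Let a > 0 and b > 0 be real. Then there exists y > 0 with b·y = 1 − e^{−2ay} if and only if b < 2a; moreover, when b < 2a such a y is unique. (This characterizes the existence of a single negative eigenvalue for the delta-perturbed Laplacian on the half line at distance a from the Dirichlet boundary.) -/
open Filter Set

private lemma stmt14_aux (a b : ℝ) (ha : 0 < a) (hb : 0 < b) (hba : b < 2 * a) :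
    ∃! y : ℝ, 0 < y ∧ b * y = 1 - Real.exp (-(2 * a * y)) := by
  set f : ℝ → ℝ := fun y => Real.exp (-(2 * a * y)) - 1 + b * y with hf
  have hf0 : f 0 = 0 := by simp [hf]
  have hiff : ∀ y : ℝ, (b * y = 1 - Real.exp (-(2 * a * y))) ↔ f y = 0 := by
    intro y; constructor <;> intro h <;> simp [hf] at * <;> linarith
  -- derivative
  have hd : ∀ y : ℝ, HasDerivAt f (Real.exp (-(2 * a * y)) * (-(2 * a)) + b) y := by
    intro y
    have h1 : HasDerivAt (fun y : ℝ => -(2 * a * y)) (-(2 * a)) y := by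
      simpa using ((hasDerivAt_id y).const_mul (2 * a)).fun_neg
    have h2 := (Real.hasDerivAt_exp (-(2 * a * y))).comp y h1
    have h3 : HasDerivAt (fun y : ℝ => b * y) b y := by
      simpa using (hasDerivAt_id y).const_mul b
    simpa using (h2.sub_const 1).fun_add h3
  have hderiv : deriv f = fun y => Real.exp (-(2 * a * y)) * (-(2 * a)) + b :=
    funext fun y => (hd y).deriv
  have hd2 : ∀ y : ℝ, HasDerivAt (deriv f) (4 * a ^ 2 * Real.exp (-(2 * a * y))) y := by
    intro y
    rw [hderiv]
    have h1 : HasDerivAt (fun y : ℝ => -(2 * a * y)) (-(2 * a)) y := by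
      simpa using ((hasDerivAt_id y).const_mul (2 * a)).fun_neg
    have h2 := (Real.hasDerivAt_exp (-(2 * a * y))).comp y h1
    have : HasDerivAt (fun x => -(2 * a) * (Real.exp ∘ fun y => -(2 * a * y)) x + b)
        (-(2 * a) * (Real.exp (-(2 * a * y)) * -(2 * a))) y := ((h2.const_mul (-(2 * a))).add_const b)
    convert this using 1
    · funext z; simp [Function.comp]; ring
    · ring
  have hconv : StrictConvexOn ℝ (univ : Set ℝ) f := by
    apply strictConvexOn_of_deriv2_pos convex_univ
      (Continuous.continuousOn (by continuity))
    intro x _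
    have : deriv^[2] f x = 4 * a ^ 2 * Real.exp (-(2 * a * x)) := by
      simp only [Function.iterate_succ, Function.iterate_zero, Function.comp_apply, id]
      exact (hd2 x).deriv
    rw [this]
    positivity
  -- f is negative just to the right of 0
  have hneg : ∃ y₁ : ℝ, 0 < y₁ ∧ f y₁ < 0 := by
    have hslope : Tendsto (slope f 0) (nhdsWithin 0 {(0:ℝ)}ᶜ)
        (nhds (Real.exp (-(2 * a * 0)) * (-(2 * a)) + b)) :=
      hasDerivAt_iff_tendsto_slope.1 (hd 0)
    have hlt : ∀ᶠ y in nhdsWithin (0:ℝ) {(0:ℝ)}ᶜ, slope f 0 y < 0 :=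
      hslope (Iio_mem_nhds (by simp; linarith))
    have hlt' : ∀ᶠ y in nhdsWithin (0:ℝ) (Ioi 0), slope f 0 y < 0 :=
      hlt.filter_mono (nhdsWithin_mono 0 (fun x hx => ne_of_gt hx))
    have hpos : ∀ᶠ y in nhdsWithin (0:ℝ) (Ioi 0), (0:ℝ) < y := self_mem_nhdsWithin
    obtain ⟨y₁, hy₁, hy₁pos⟩ := (hlt'.and hpos).exists
    refine ⟨y₁, hy₁pos, ?_⟩
    have hsl : slope f 0 y₁ = y₁⁻¹ * f y₁ := by simp [slope, hf0]
    rw [hsl] at hy₁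
    have := mul_neg_of_pos_of_neg hy₁pos hy₁
    rwa [mul_inv_cancel_left₀ (ne_of_gt hy₁pos)] at this
  obtain ⟨y₁, hy₁pos, hy₁neg⟩ := hneg
  -- f is positive for large y
  set y₂ : ℝ := max y₁ (2 / b) with hy₂
  have hy₁y₂ : y₁ ≤ y₂ := le_max_left _ _
  have hy₂pos : f y₂ > 0 := by
    have h1 : b * y₂ ≥ 2 := by
      have : y₂ ≥ 2 / b := le_max_right _ _
      calc b * y₂ ≥ b * (2 / b) := by nlinarith
        _ = 2 := by field_simp
    have h2 : Real.exp (-(2 * a * y₂)) > 0 := Real.exp_pos _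
    simp only [hf]; linarith
  -- IVT
  have hcont : ContinuousOn f (Icc y₁ y₂) := Continuous.continuousOn (by continuity)
  have hIVT := intermediate_value_Icc hy₁y₂ hcont
  have h0mem : (0 : ℝ) ∈ Icc (f y₁) (f y₂) := ⟨hy₁neg.le, hy₂pos.le⟩
  obtain ⟨c, hcmem, hc0⟩ := hIVT h0mem
  have hcpos : 0 < c := lt_of_lt_of_le hy₁pos hcmem.1
  -- uniqueness from strict convexity: at most one positive zero
  have huniq : ∀ y z : ℝ, 0 < y → y < z → f y = 0 → f z = 0 → False := by
    intro y z hy hyz hfy hfz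
    have hzpos : 0 < z := hy.trans hyz
    set t : ℝ := y / z with ht
    have ht0 : 0 < t := div_pos hy hzpos
    have ht1 : t < 1 := (div_lt_one hzpos).2 hyz
    have key := hconv.2 (mem_univ (0:ℝ)) (mem_univ z) (ne_of_lt hzpos)
      (by linarith : (0:ℝ) < 1 - t) ht0 (by ring)
    have heq : (1 - t) • (0:ℝ) + t • z = y := by
      simp [ht, smul_eq_mul]
      field_simp
    rw [heq, hfy, hf0, hfz] at key
    simp at key
  refine ⟨c, ⟨hcpos, (hiff c).2 hc0⟩, ?_⟩
  rintro z ⟨hzpos, hzeq⟩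
  have hfz : f z = 0 := (hiff z).1 hzeq
  rcases lt_trichotomy z c with h | h | h
  · exact absurd (huniq z c hzpos h hfz hc0) (by simp)
  · exact h
  · exact absurd (huniq c z hcpos h hc0 hfz) (by simp)

/-- For real `a > 0`, `b > 0`: there exists `y > 0` with `b·y = 1 − e^{−2ay}` if and
only if `b < 2a`; moreover, when `b < 2a`, such a `y` is unique. -/
theorem stmt14 (a b : ℝ) (ha : 0 < a) (hb : 0 < b) :
    ((∃ y : ℝ, 0 < y ∧ b * y = 1 - Real.exp (-(2 * a * y))) ↔ b < 2 * a) ∧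
    (b < 2 * a → ∃! y : ℝ, 0 < y ∧ b * y = 1 - Real.exp (-(2 * a * y))) := by
  have hforward : (∃ y : ℝ, 0 < y ∧ b * y = 1 - Real.exp (-(2 * a * y))) → b < 2 * a := by
    rintro ⟨y, hy, heq⟩
    have hne : -(2 * a * y) ≠ 0 := ne_of_lt (by nlinarith : -(2 * a * y) < 0)
    have := Real.add_one_lt_exp hne
    -- -(2ay) + 1 < exp(-(2ay)), so 1 - exp < 2ay, so b*y < 2a*y
    have h2 : b * y < 2 * a * y := by linarith
    exact lt_of_mul_lt_mul_right (by linarith) hy.le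
  constructor
  · exact ⟨hforward, fun h => (stmt14_aux a b ha hb h).exists⟩
  · exact fun h => stmt14_aux a b ha hb h
end

section
/- Let a > 0, b > 0, v > 0 be real, set D(w) = b − i w + e^{2iaw}/(2a) and r(w) = (1 − e^{2iaw}) / ( i w D(w) ) for complex w. Then D(v) ≠ 0 and D(−v) ≠ 0, and (v/(π i)) ( r(−v) − r(v) ) = −(4a/π) · (1 − 2ab + 2ab·cos(2av) − 2av·sin(2av) − cos(2av)) / (1 + 4a²(b² + v²) + 4ab·cos(2av) − 4av·sin(2av)). (The left side is the boundary-value jump across the continuous spectrum of the trace of the resolvent difference for the delta-perturbed Laplacian on the half space ℍ³, and the right side is the relative spectral measure e(v; −Δ^{g_R}, −Δ⁰) with b = 2/(π² g_R).) -/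
/-- Relative spectral measure for the delta-perturbed Laplacian on the half space `ℍ³`:
with `D(w) = b − iw + e^{2iaw}/(2a)` and `r(w) = (1 − e^{2iaw})/(i w D(w))`, for real
`a, b, v > 0` one has `D(v) ≠ 0`, `D(−v) ≠ 0`, and
`(v/(πi))(r(−v) − r(v)) = −(4a/π) (1 − 2ab + 2ab cos(2av) − 2av sin(2av) − cos(2av)) /
(1 + 4a²(b²+v²) + 4ab cos(2av) − 4av sin(2av))`. -/
theorem stmt17 (a b v : ℝ) (ha : 0 < a) (hb : 0 < b) (hv : 0 < v)
    (D r : ℂ → ℂ)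
    (hD : ∀ w : ℂ, D w = (b : ℂ) - Complex.I * w
      + Complex.exp (2 * Complex.I * (a : ℂ) * w) / (2 * (a : ℂ)))
    (hr : ∀ w : ℂ, r w = (1 - Complex.exp (2 * Complex.I * (a : ℂ) * w))
      / (Complex.I * w * D w)) :
    D (v : ℂ) ≠ 0 ∧ D (-(v : ℂ)) ≠ 0 ∧
    ((v : ℂ) / ((Real.pi : ℂ) * Complex.I)) * (r (-(v : ℂ)) - r (v : ℂ))
      = -(4 * (a : ℂ) / (Real.pi : ℂ)) *
          (((1 : ℂ) - 2 * a * b + 2 * (a : ℂ) * (b : ℂ) * (Real.cos (2 * a * v) : ℂ)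
              - 2 * (a : ℂ) * (v : ℂ) * (Real.sin (2 * a * v) : ℂ)
              - (Real.cos (2 * a * v) : ℂ))
            / ((1 : ℂ) + 4 * (a : ℂ) ^ 2 * ((b : ℂ) ^ 2 + (v : ℂ) ^ 2)
              + 4 * (a : ℂ) * (b : ℂ) * (Real.cos (2 * a * v) : ℂ)
              - 4 * (a : ℂ) * (v : ℂ) * (Real.sin (2 * a * v) : ℂ))) := by
  have ha' : (a:ℂ) ≠ 0 := by exact_mod_cast ha.ne'
  have hv' : (v:ℂ) ≠ 0 := by exact_mod_cast hv.ne'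
  have hpi : (Real.pi:ℂ) ≠ 0 := by exact_mod_cast Real.pi_ne_zero
  set c := Real.cos (2*a*v) with hcdef
  set s := Real.sin (2*a*v) with hsdef
  have hsc : s^2 + c^2 = 1 := Real.sin_sq_add_cos_sq (2*a*v)
  have hslt : s < 2*a*v := Real.sin_lt (by positivity)
  have hE : Complex.exp (2 * Complex.I * (a:ℂ) * (v:ℂ)) = (c:ℂ) + (s:ℂ) * Complex.I := by
    have h1 : (2 * Complex.I * (a:ℂ) * (v:ℂ)) = ((2*a*v : ℝ) : ℂ) * Complex.I := by
      push_cast; ring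
    rw [h1, Complex.exp_mul_I]
    push_cast [hcdef, hsdef]
    simp
  have hE' : Complex.exp (2 * Complex.I * (a:ℂ) * (-(v:ℂ))) = (c:ℂ) - (s:ℂ) * Complex.I := by
    have h1 : (2 * Complex.I * (a:ℂ) * (-(v:ℂ))) = ((-(2*a*v) : ℝ) : ℂ) * Complex.I := by
      push_cast; ring
    rw [h1, Complex.exp_mul_I]
    push_cast [hcdef, hsdef]
    simp [Real.cos_neg, Real.sin_neg]
    ring
  have him : s/(2*a) - v < 0 := by
    rw [sub_neg, div_lt_iff₀ (by positivity)]
    linarith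
  have hDv : D (v:ℂ) = ↑(b + c/(2*a)) + ↑(s/(2*a) - v) * Complex.I := by
    rw [hD, hE]; push_cast; field_simp; ring
  have hDm : D (-(v:ℂ)) = ↑(b + c/(2*a)) + ↑(v - s/(2*a)) * Complex.I := by
    rw [hD, hE']; push_cast; field_simp; ring
  have hDv0 : D (v:ℂ) ≠ 0 := by
    intro h
    rw [hDv] at h
    have := congrArg Complex.im h
    simp only [Complex.add_im, Complex.ofReal_im, Complex.mul_im, Complex.ofReal_re,
      Complex.I_im, Complex.I_re, Complex.zero_im, mul_zero, mul_one, zero_add, add_zero] at this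
    linarith
  have hDm0 : D (-(v:ℂ)) ≠ 0 := by
    intro h
    rw [hDm] at h
    have := congrArg Complex.im h
    simp only [Complex.add_im, Complex.ofReal_im, Complex.mul_im, Complex.ofReal_re,
      Complex.I_im, Complex.I_re, Complex.zero_im, mul_zero, mul_one, zero_add, add_zero] at this
    linarith
  refine ⟨hDv0, hDm0, ?_⟩
  have hQ : (0:ℝ) < 1 + 4*a^2*(b^2+v^2) + 4*a*b*c - 4*a*v*s := by
    nlinarith [sq_nonneg (2*a*b+c), sq_nonneg (2*a*v-s), mul_pos (sub_pos.2 hslt) (sub_pos.2 hslt)]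
  have hQ' : (1:ℂ) + 4 * (a:ℂ)^2 * ((b:ℂ)^2 + (v:ℂ)^2) + 4*(a:ℂ)*(b:ℂ)*(c:ℂ) - 4*(a:ℂ)*(v:ℂ)*(s:ℂ) ≠ 0 := by
    have h0 : ((1 + 4*a^2*(b^2+v^2) + 4*a*b*c - 4*a*v*s : ℝ) : ℂ) ≠ 0 := by
      exact_mod_cast hQ.ne'
    push_cast at h0
    convert h0 using 2 <;> ring
  rw [hD] at hDv0 hDm0
  rw [hE] at hDv0
  rw [hE'] at hDm0
  simp only [hr, hD, hE, hE']
  have hsc' : (s:ℂ)^2 + (c:ℂ)^2 = 1 := by exact_mod_cast hsc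
  field_simp at hDv0 hDm0
  field_simp [hDv0, hDm0]
  have h1 : ((↑b - -(↑v * Complex.I)) * 2 * ↑a + (↑c - Complex.I * ↑s)) * (2 * ↑a * (↑b - ↑v * Complex.I) + (↑c + Complex.I * ↑s))
      = 1 + (a:ℂ) ^ 2 * 4 * ((b:ℂ) ^ 2 + (v:ℂ) ^ 2) + (c:ℂ) * b * a * 4 - (v:ℂ) * s * a * 4 := by
    linear_combination (-4*(a:ℂ)^2*(v:ℂ)^2 + 4*(a:ℂ)*v*s - (s:ℂ)^2) * Complex.I_sq + hsc'
  have h2 : (-(1 - ((c:ℂ) - Complex.I * ↑s))) * (2 * ↑a * (↑b - ↑v * Complex.I) + (↑c + Complex.I * ↑s))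
      - ((↑b - -(↑v * Complex.I)) * 2 * ↑a + (↑c - Complex.I * ↑s)) * (1 - ((c:ℂ) + Complex.I * ↑s))
      = 2 * (1 - ↑b * 2 * ↑a + ↑c * ↑b * 2 * ↑a - ↑v * ↑s * 2 * ↑a - ↑c) := by
    linear_combination (4*(a:ℂ)*v*s - 2*(s:ℂ)^2) * Complex.I_sq + 2 * hsc'
  have hm : ((↑b - -(↑v * Complex.I)) * 2 * ↑a + (↑c - Complex.I * ↑s)) ≠ 0 := by
    intro h; apply hDm0; rw [div_eq_zero_iff]; left; linear_combination h
  have hp : (2 * ↑a * (↑b - ↑v * Complex.I) + (↑c + Complex.I * ↑s)) ≠ 0 := by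
    intro h; apply hDv0; rw [div_eq_zero_iff]; left; linear_combination h
  rw [← neg_div, div_sub_div _ _ hm hp, h1, h2, Complex.I_sq]
  ring
end
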